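/- arXiv:0805.2778 — 8 statements merged into one kernel-verified Lean document; each statement's English description precedes it below -/
import Mathlib

section
/- Let κ be an infinite regular cardinal and C a κ-bounded category satisfying the amalgamation property and the joint embedding property, and suppose there exists a dominating family F of morphisms of C with card(F) ≤ κ. Let i : C → D be a fully faithful embedding such that D has colimits of all κ-chains with values in the image of C and every object of C is κ-small in D. Then there exists an object of D_κ that is both C-homogeneous and C-universal. -/
open CategoryTheory CategoryTheory.Limits Opposite

universe w v₁ u₁ v₂ u₂

namespace Fraisse

variable {C : Type u₁} [Category.{v₁} C] {D : Type u₂} [Category.{v₂} D]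

/-- The amalgamation property. -/
def AP (C : Type u₁) [Category.{v₁} C] : Prop :=
  ∀ ⦃a b c : C⦄ (f : a ⟶ b) (g : a ⟶ c),
    ∃ (d : C) (f' : b ⟶ d) (g' : c ⟶ d), f ≫ f' = g ≫ g'

/-- The joint embedding property. -/
def JEP (C : Type u₁) [Category.{v₁} C] : Prop :=
  ∀ a b : C, ∃ c : C, Nonempty (a ⟶ c) ∧ Nonempty (b ⟶ c)

/-- A category is `κ`-bounded if every chain of length `< κ` admits a cocone. -/
def IsBounded (κ : Cardinal.{w}) (C : Type u₁) [Category.{v₁} C] : Prop :=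
  ∀ lam : Ordinal.{w}, lam < κ.ord → ∀ F : lam.ToType ⥤ C, Nonempty (Cocone F)

/-- The type of morphisms of a category, bundled with domain and codomain. -/
def Mor (C : Type u₁) [Category.{v₁} C] : Type max u₁ v₁ := Σ (a : C) (b : C), a ⟶ b

/-- A dominating family of morphisms. -/
def Dominating (F : Set (Mor C)) : Prop :=
  (∀ x : C, ∃ s ∈ F, Nonempty (x ⟶ s.1)) ∧
  ∀ s ∈ F, ∀ (x : C) (f : s.1 ⟶ x), ∃ (y : C) (g : x ⟶ y),
    (⟨s.1, y, f ≫ g⟩ : Mor C) ∈ F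

/-- `u` is `C`-homogeneous with respect to the embedding `i : C ⥤ D`. -/
def IsHomog (i : C ⥤ D) (u : D) : Prop :=
  ∀ ⦃a b : C⦄ (j : a ⟶ b) (χ : i.obj a ⟶ u), ∃ χ' : i.obj b ⟶ u, i.map j ≫ χ' = χ

/-- `u` is `C`-universal with respect to the embedding `i : C ⥤ D`. -/
def IsUniv (i : C ⥤ D) (u : D) : Prop :=
  ∀ a : C, Nonempty (i.obj a ⟶ u)

/-- `u` is `C`-ultrahomogeneous with respect to the embedding `i : C ⥤ D`. -/
def IsUltrahomog (i : C ⥤ D) (u : D) : Prop :=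
  ∀ ⦃a b : C⦄ (j : a ⟶ b) (χ₁ : i.obj a ⟶ u) (χ₂ : i.obj b ⟶ u),
    ∃ k : u ≅ u, χ₁ ≫ k.hom = i.map j ≫ χ₂

/-- An object `a` of `C` is `κ`-small in `D` if `Hom_D(i(a), -)` preserves colimits of
`κ`-chains in `D`. -/
def KappaSmall (κ : Cardinal.{w}) (i : C ⥤ D) (a : C) : Prop :=
  PreservesColimitsOfShape κ.ord.ToType (coyoneda.obj (op (i.obj a)))

/-- Membership in `D_κ`: `d` is a colimit in `D` of a `κ`-chain with values in the image
of `C`. -/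
def InDk (κ : Cardinal.{w}) (i : C ⥤ D) (d : D) : Prop :=
  ∃ (U : κ.ord.ToType ⥤ C) (c : Cocone (U ⋙ i)), Nonempty (IsColimit c) ∧ c.pt = d

/-- A limit point of a linear order: an element which is neither minimal nor a successor. -/
def IsLimitElem {α : Type w} [LinearOrder α] (j : α) : Prop :=
  (∃ m, m < j) ∧ ∀ m, m < j → ∃ m', m < m' ∧ m' < j

/-- The inclusion functor of the initial segment below `j`. -/
def segIncl {α : Type w} [LinearOrder α] (j : α) : {m : α // m < j} ⥤ α :=
  Monotone.functor (f := fun m => (m : α)) fun _ _ h => h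

/-- The cocone over the restriction of a chain `U` to the initial segment below `j`,
with point `U.obj j` and legs `U.map (u_m ⟶ u_j)`. -/
def restrCocone {α : Type w} [LinearOrder α] (U : α ⥤ C) (j : α) :
    Cocone (segIncl j ⋙ U) where
  pt := U.obj j
  ι :=
    { app := fun m => U.map (homOfLE m.2.le)
      naturality := fun m m' g => by
        dsimp [segIncl]
        rw [Category.comp_id, ← U.map_comp]
        congr 1 }

/-- A chain is continuous if at every limit point `j` the object `U.obj j`, together with
the canonical morphisms, is a colimit of the restriction of `U` below `j`. -/
def ContinuousChain {α : Type w} [LinearOrder α] (U : α ⥤ C) : Prop :=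
  ∀ j : α, IsLimitElem j → Nonempty (IsColimit (restrCocone U j))

/-- Membership in `D_κ^c`: `d` is a colimit in `D` of a continuous `κ`-chain with values
in the image of `C`. -/
def InDkc (κ : Cardinal.{w}) (i : C ⥤ D) (d : D) : Prop :=
  ∃ (U : κ.ord.ToType ⥤ C), ContinuousChain U ∧
    ∃ c : Cocone (U ⋙ i), Nonempty (IsColimit c) ∧ c.pt = d

/-- All morphisms of the full subcategory of `D` on `P` are monomorphisms (as arrows of
that full subcategory). -/
def AllMonoOn (P : D → Prop) : Prop :=
  ∀ ⦃a b : D⦄, P a → P b → ∀ (f : a ⟶ b), ∀ ⦃x : D⦄, P x →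
    ∀ (g h : x ⟶ a), g ≫ f = h ≫ f → g = h

/-- A Fraïssé sequence. -/
def IsFraisseSeq {α : Type w} [LinearOrder α] (U : α ⥤ C) : Prop :=
  (∀ a : C, ∃ j : α, Nonempty (a ⟶ U.obj j)) ∧
  ∀ (j : α) (x : C) (f : U.obj j ⟶ x),
    ∃ (l : α) (h : j ≤ l) (g : x ⟶ U.obj l), U.map (homOfLE h) = f ≫ g

/-- The extension property for a chain. -/
def HasExtProp {α : Type w} [LinearOrder α] (U : α ⥤ C) : Prop :=
  ∀ ⦃a b : C⦄ (f : a ⟶ b) (j : α) (g : a ⟶ U.obj j),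
    ∃ (l : α) (h : j ≤ l) (k : b ⟶ U.obj l), g ≫ U.map (homOfLE h) = f ≫ k



theorem eqToHom_self {C : Type u₁} [Category.{v₁} C] {a : C} (h : a = a) :
    eqToHom h = 𝟙 a := eqToHom_refl a h

section Chain
variable {α : Type w} [LinearOrder α] {C : Type u₁} [Category.{v₁} C]

/-- A coherent chain on the segment `[⊥, j]`: objects strictly below `j`, connecting maps,
a top object and legs into it. -/
structure Sys (α : Type w) [LinearOrder α] (C : Type u₁) [Category.{v₁} C] (j : α) where
  obj : ∀ m : α, m < j → C
  map : ∀ (m l : α) (h : m ≤ l) (hl : l < j), obj m (h.trans_lt hl) ⟶ obj l hl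
  top : C
  leg : ∀ m (hm : m < j), obj m hm ⟶ top
  map_self : ∀ m (hm : m < j), map m m le_rfl hm = 𝟙 (obj m hm)
  map_trans : ∀ (m l n : α) (h1 : m ≤ l) (h2 : l ≤ n) (hn : n < j),
      map m n (h1.trans h2) hn = map m l h1 (h2.trans_lt hn) ≫ map l n h2 hn
  leg_w : ∀ (m l : α) (h : m ≤ l) (hl : l < j),
      map m l h hl ≫ leg l hl = leg m (h.trans_lt hl)

/-- `T` (on `[⊥,j]`) extends `S` (on `[⊥,m]`), `m < j`. -/
structure Sys.Extends {j m : α} (T : Sys α C j) (S : Sys α C m) (hml : m < j) : Prop where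
  obj_eq : ∀ k (hk : k < m), T.obj k (hk.trans hml) = S.obj k hk
  top_eq : T.obj m hml = S.top
  map_eq : ∀ k k' (h : k ≤ k') (hk' : k' < m),
    T.map k k' h (hk'.trans hml) =
      eqToHom (obj_eq k (h.trans_lt hk')) ≫ S.map k k' h hk' ≫ eqToHom (obj_eq k' hk').symm
  leg_eq : ∀ k (hk : k < m),
    T.map k m hk.le hml = eqToHom (obj_eq k hk) ≫ S.leg k hk ≫ eqToHom top_eq.symm

theorem Sys.congr_obj {j : α} {S T : Sys α C j} (h : S = T) (m : α) (hm : m < j) :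
    S.obj m hm = T.obj m hm := by rw [h]

theorem Sys.congr_top {j : α} {S T : Sys α C j} (h : S = T) : S.top = T.top := by rw [h]

theorem Sys.congr_leg {j : α} {S T : Sys α C j} (h : S = T) (m : α) (hm : m < j) :
    S.leg m hm = eqToHom (S.congr_obj h m hm) ≫ T.leg m hm
      ≫ eqToHom (S.congr_top h).symm := by
  subst h; simp [eqToHom_self]

theorem Sys.extends_of_eq {j m : α} {T T' : Sys α C j} {S : Sys α C m} {hml : m < j}
    (h : T' = T) (hT : T.Extends S hml) : T'.Extends S hml := h ▸ hT

/-- Goodness of a family of systems below `j`. -/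
def GoodBelow (j : α) (ih : ∀ m, m < j → Sys α C m) : Prop :=
  ∀ m l (hml : m < l) (hl : l < j), (ih l hl).Extends (ih m (hml.trans hl)) hml

variable {j : α} {ih : ∀ m, m < j → Sys α C m}

/-- Connecting morphism between the tops of a good family. -/
noncomputable def chainMapAux (ih : ∀ m, m < j → Sys α C m) (good : GoodBelow j ih)
    {m l : α} (h : m ≤ l) (hm : m < j) (hl : l < j) : (ih m hm).top ⟶ (ih l hl).top :=
  if he : m = l then eqToHom (by subst he; rfl)
  else eqToHom ((good m l (h.lt_of_ne he) hl).top_eq).symm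
    ≫ (ih l hl).leg m (h.lt_of_ne he)

theorem chainMapAux_self (good : GoodBelow j ih) {m : α} (h : m ≤ m) (hm : m < j) :
    chainMapAux ih good h hm hm = 𝟙 _ := by
  rw [chainMapAux, dif_pos rfl, eqToHom_self]

theorem chainMapAux_trans (good : GoodBelow j ih) {m l n : α} (h1 : m ≤ l) (h2 : l ≤ n)
    (hm : m < j) (hl : l < j) (hn : n < j) :
    chainMapAux ih good h1 hm hl ≫ chainMapAux ih good h2 hl hn
      = chainMapAux ih good (h1.trans h2) hm hn := by
  rcases eq_or_lt_of_le h1 with rfl | h1'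
  · rw [chainMapAux_self good _ hm, Category.id_comp]
  rcases eq_or_lt_of_le h2 with rfl | h2'
  · rw [chainMapAux_self good _ hl, Category.comp_id]
  have hmn : m < n := h1'.trans h2'
  rw [chainMapAux, chainMapAux, chainMapAux, dif_neg h1'.ne, dif_neg h2'.ne,
    dif_neg hmn.ne]
  have hleq := (good l n h2' hn).leg_eq m h1'
  have : (ih l hl).leg m h1'
      = eqToHom (((good l n h2' hn).obj_eq m h1')).symm
        ≫ (ih n hn).map m l h1'.le h2' ≫ eqToHom ((good l n h2' hn).top_eq) := by
    rw [hleq]; simp [eqToHom_self]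
  rw [this]
  simp only [Category.assoc, eqToHom_trans, eqToHom_trans_assoc, eqToHom_self,
    Category.id_comp]
  rw [← Category.assoc, ← (ih n hn).leg_w m l h1'.le h2']
  simp [eqToHom_trans_assoc]

/-- The chain of tops of a good family below `j`, as a functor. -/
noncomputable def chainFunctor (good : GoodBelow j ih) : {m : α // m < j} ⥤ C where
  obj m := (ih m.1 m.2).top
  map {m m'} f := chainMapAux ih good (Subtype.coe_le_coe.mpr (leOfHom f)) m.2 m'.2
  map_id m := chainMapAux_self good (le_refl m.1) m.2
  map_comp {m m' m''} f g :=
    (chainMapAux_trans good (Subtype.coe_le_coe.mpr (leOfHom f))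
      (Subtype.coe_le_coe.mpr (leOfHom g)) m.2 m'.2 m''.2).symm

/-- Extension of a good family below `j` to a system on `[⊥, j]`. -/
noncomputable def extendSys (good : GoodBelow j ih) (c : C)
    (leg : ∀ m (hm : m < j), (ih m hm).top ⟶ c)
    (hleg : ∀ (m l : α) (h : m ≤ l) (hm : m < j) (hl : l < j),
      chainMapAux ih good h hm hl ≫ leg l hl = leg m hm) : Sys α C j where
  obj m hm := (ih m hm).top
  map m l h hl := chainMapAux ih good h (h.trans_lt hl) hl
  top := c
  leg := leg
  map_self m hm := chainMapAux_self good _ hm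
  map_trans m l n h1 h2 hn := (chainMapAux_trans good h1 h2 _ _ hn).symm
  leg_w m l h hl := hleg m l h _ hl

theorem extendSys_extends (good : GoodBelow j ih) (c : C) (leg) (hleg) {m : α}
    (hm : m < j) : (extendSys good c leg hleg).Extends (ih m hm) hm := by
  have ho : ∀ k (hk : k < m),
      (extendSys good c leg hleg).obj k (hk.trans hm) = (ih m hm).obj k hk :=
    fun k hk => ((good k m hk hm).top_eq).symm
  refine ⟨ho, rfl, fun k k' h hk' => ?_, fun k hk => ?_⟩
  · show chainMapAux ih good h _ _ = _
    rcases eq_or_lt_of_le h with rfl | h'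
    · rw [chainMapAux_self good _ ((le_refl k).trans_lt (hk'.trans hm)),
        (ih m hm).map_self k hk']
      simp only [Category.comp_id, Category.id_comp, eqToHom_trans, eqToHom_self]
      rfl
    · have hleq := (good k' m hk' hm).leg_eq k h'
      rw [chainMapAux, dif_neg h'.ne, hleq]
      simp only [Category.assoc, eqToHom_trans, eqToHom_trans_assoc, eqToHom_self,
        Category.id_comp, Category.comp_id]
      erw [eqToHom_refl, Category.comp_id]
      rfl
  · show chainMapAux ih good hk.le _ _ = _
    rw [chainMapAux, dif_neg hk.ne]
    erw [eqToHom_refl, Category.comp_id]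
    rfl

def junkSys (j : α) (c₀ : C) : Sys α C j where
  obj _ _ := c₀
  map _ _ _ _ := 𝟙 c₀
  top := c₀
  leg _ _ := 𝟙 c₀
  map_self _ _ := rfl
  map_trans _ _ _ _ _ _ := by simp
  leg_w _ _ _ _ := by simp

variable [WellFoundedLT α]

open Classical in
/-- One step of the transfinite construction. -/
noncomputable def realStep (c₀ : C)
    (nx : ∀ (β : α) (S : Sys α C β), Σ c : C, S.top ⟶ c)
    (lc : ∀ (j : α) (H : {m : α // m < j} ⥤ C), Cocone H)
    (j : α) (ih : ∀ m, m < j → Sys α C m) : Sys α C j :=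
  if good : GoodBelow j ih then
    if hmax : ∃ β, β < j ∧ ∀ l, l < j → l ≤ β then
      extendSys good (nx hmax.choose (ih hmax.choose hmax.choose_spec.1)).1
        (fun m hm => chainMapAux ih good (hmax.choose_spec.2 m hm) hm hmax.choose_spec.1
          ≫ (nx hmax.choose (ih hmax.choose hmax.choose_spec.1)).2)
        (fun m l h hm hl => by rw [← Category.assoc, chainMapAux_trans])
    else
      extendSys good (lc j (chainFunctor good)).pt
        (fun m hm => ((lc j (chainFunctor good)).ι.app ⟨m, hm⟩ : (ih m hm).top ⟶ _))
        (fun m l h hm hl =>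
          (lc j (chainFunctor good)).w
            (homOfLE (show (⟨m, hm⟩ : {m : α // m < j}) ≤ ⟨l, hl⟩ from h)))
  else junkSys j c₀

variable (c₀ : C) (nx : ∀ (β : α) (S : Sys α C β), Σ c : C, S.top ⟶ c)
  (lc : ∀ (j : α) (H : {m : α // m < j} ⥤ C), Cocone H)

noncomputable def Ssys : ∀ j : α, Sys α C j :=
  WellFoundedLT.fix (realStep c₀ nx lc)

theorem Ssys_eq (j : α) :
    Ssys c₀ nx lc j = realStep c₀ nx lc j (fun m _ => Ssys c₀ nx lc m) :=
  WellFoundedLT.fix_eq (realStep c₀ nx lc) j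

theorem extends_all : ∀ (l m : α) (hm : m < l),
    (Ssys c₀ nx lc l).Extends (Ssys c₀ nx lc m) hm := by
  intro l
  induction l using WellFoundedLT.induction with
  | ind l IH =>
  intro m hm
  have good : GoodBelow l (fun k _ => Ssys c₀ nx lc k) := fun a b hab hb => IH b hb a hab
  refine Sys.extends_of_eq (Ssys_eq c₀ nx lc l) ?_
  unfold realStep
  rw [dif_pos good]
  split_ifs with hmax
  · exact extendSys_extends good _ _ _ hm
  · exact extendSys_extends good _ _ _ hm

noncomputable def chainObj (j : α) : C := (Ssys c₀ nx lc j).top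

attribute [reducible] chainObj

noncomputable def chainHom : ∀ {m l : α}, m ≤ l → (chainObj c₀ nx lc m ⟶ chainObj c₀ nx lc l) :=
  fun {m l} h =>
    if he : m = l then eqToHom (by subst he; rfl)
    else eqToHom ((extends_all c₀ nx lc l m (h.lt_of_ne he)).top_eq).symm
      ≫ (Ssys c₀ nx lc l).leg m (h.lt_of_ne he)

theorem chainHom_self {m : α} (h : m ≤ m) : chainHom c₀ nx lc h = 𝟙 _ := by
  rw [chainHom, dif_pos rfl, eqToHom_self]

theorem chainHom_lt {m l : α} (h : m < l) :
    chainHom c₀ nx lc h.le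
      = eqToHom ((extends_all c₀ nx lc l m h).top_eq).symm
        ≫ (Ssys c₀ nx lc l).leg m h := by
  rw [chainHom, dif_neg h.ne]

theorem chainHom_trans {m l n : α} (h1 : m ≤ l) (h2 : l ≤ n) :
    chainHom c₀ nx lc h1 ≫ chainHom c₀ nx lc h2 = chainHom c₀ nx lc (h1.trans h2) := by
  rcases eq_or_lt_of_le h1 with rfl | h1'
  · rw [chainHom_self, Category.id_comp]
  rcases eq_or_lt_of_le h2 with rfl | h2'
  · rw [chainHom_self, Category.comp_id]
  have hmn : m < n := h1'.trans h2'
  rw [chainHom, chainHom, chainHom, dif_neg h1'.ne, dif_neg h2'.ne, dif_neg hmn.ne]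
  have hleq := (extends_all c₀ nx lc n l h2').leg_eq m h1'
  have : (Ssys c₀ nx lc l).leg m h1'
      = eqToHom (((extends_all c₀ nx lc n l h2').obj_eq m h1')).symm
        ≫ (Ssys c₀ nx lc n).map m l h1'.le h2'
        ≫ eqToHom ((extends_all c₀ nx lc n l h2').top_eq) := by
    rw [hleq]; simp [eqToHom_self]
  rw [this]
  simp only [Category.assoc, eqToHom_trans, eqToHom_trans_assoc, eqToHom_self,
    Category.id_comp]
  rw [← Category.assoc, ← (Ssys c₀ nx lc n).leg_w m l h1'.le h2']
  simp [eqToHom_trans_assoc]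

/-- The Fraïssé chain, as a functor. -/
noncomputable def chainF : α ⥤ C where
  obj := chainObj c₀ nx lc
  map {m l} f := chainHom c₀ nx lc (leOfHom f)
  map_id m := chainHom_self c₀ nx lc le_rfl
  map_comp {m l n} f g := (chainHom_trans c₀ nx lc (leOfHom f) (leOfHom g)).symm

theorem Ssys_succ_core (j : α) (hmax : ∃ β, β < j ∧ ∀ l, l < j → l ≤ β) :
    ∃ e : chainObj c₀ nx lc j = (nx hmax.choose (Ssys c₀ nx lc hmax.choose)).1,
      chainHom c₀ nx lc hmax.choose_spec.1.le ≫ eqToHom e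
        = (nx hmax.choose (Ssys c₀ nx lc hmax.choose)).2 := by
  have good : GoodBelow j (fun m (_ : m < j) => Ssys c₀ nx lc m) :=
    fun a b hab hb => extends_all c₀ nx lc b a hab
  have hT : Ssys c₀ nx lc j
      = extendSys good (nx hmax.choose (Ssys c₀ nx lc hmax.choose)).1
          (fun m hm => chainMapAux _ good (hmax.choose_spec.2 m hm) hm hmax.choose_spec.1
            ≫ (nx hmax.choose (Ssys c₀ nx lc hmax.choose)).2)
          (fun m l h hm hl => by rw [← Category.assoc, chainMapAux_trans]) := by
    rw [Ssys_eq]; unfold realStep; rw [dif_pos good, dif_pos hmax]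
  have e : chainObj c₀ nx lc j = (nx hmax.choose (Ssys c₀ nx lc hmax.choose)).1 :=
    Sys.congr_top hT
  refine ⟨e, ?_⟩
  rw [chainHom_lt c₀ nx lc hmax.choose_spec.1,
    Sys.congr_leg hT _ hmax.choose_spec.1]
  dsimp only [extendSys]
  rw [chainMapAux_self good]
  simp [eqToHom_trans_assoc, eqToHom_trans, eqToHom_self]
  erw [eqToHom_trans_assoc, eqToHom_trans, eqToHom_refl, eqToHom_refl, Category.id_comp,
    Category.comp_id]

theorem Ssys_succ (j β : α) (hβ : β < j) (hub : ∀ l, l < j → l ≤ β) :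
    ∃ e : chainObj c₀ nx lc j = (nx β (Ssys c₀ nx lc β)).1,
      chainHom c₀ nx lc hβ.le ≫ eqToHom e = (nx β (Ssys c₀ nx lc β)).2 := by
  have hmax : ∃ b, b < j ∧ ∀ l, l < j → l ≤ b := ⟨β, hβ, hub⟩
  have hc : hmax.choose = β :=
    le_antisymm (hub _ hmax.choose_spec.1) (hmax.choose_spec.2 β hβ)
  subst hc
  exact Ssys_succ_core c₀ nx lc j hmax

theorem Ssys_limit (j : α) (hmax : ¬ ∃ β, β < j ∧ ∀ l, l < j → l ≤ β) :
    ∃ H : {m : α // m < j} ⥤ C, chainObj c₀ nx lc j = (lc j H).pt := by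
  have good : GoodBelow j (fun m (_ : m < j) => Ssys c₀ nx lc m) :=
    fun a b hab hb => extends_all c₀ nx lc b a hab
  have hT : Ssys c₀ nx lc j
      = extendSys good (lc j (chainFunctor good)).pt
          (fun m hm => ((lc j (chainFunctor good)).ι.app ⟨m, hm⟩
            : (Ssys c₀ nx lc m).top ⟶ _))
          (fun m l h hm hl =>
            (lc j (chainFunctor good)).w
              (homOfLE (show (⟨m, hm⟩ : {m : α // m < j}) ≤ ⟨l, hl⟩ from h))) := by
    rw [Ssys_eq]; unfold realStep; rw [dif_pos good, dif_neg hmax]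
  exact ⟨chainFunctor good, Sys.congr_top hT⟩

end Chain



section Helpers

/-- Restriction of an order isomorphism to a strict initial segment. -/
def restrictIso {A : Type*} {B : Type*} [Preorder A] [Preorder B] (e : A ≃o B) (j : A) :
    {y : A // y < j} ≃o {z : B // z < e j} where
  toFun y := ⟨e y.1, e.strictMono y.2⟩
  invFun z := ⟨e.symm z.1, by
    have h := e.symm.strictMono z.2
    simpa using h⟩
  left_inv y := Subtype.ext (e.symm_apply_apply y.1)
  right_inv z := Subtype.ext (e.apply_symm_apply z.1)
  map_rel_iff' {y y'} := by simp [Subtype.mk_le_mk]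

/-- Initial segments of `Set.Iio o`. -/
def iioOrd {o : Ordinal.{w}} (b : Set.Iio o) :
    {z : Set.Iio o // z < b} ≃o Set.Iio b.1 where
  toFun z := ⟨z.1.1, Set.mem_Iio.mpr (Subtype.coe_lt_coe.mpr z.2)⟩
  invFun x := ⟨⟨x.1, Set.mem_Iio.mpr ((Set.mem_Iio.mp x.2).trans (Set.mem_Iio.mp b.2))⟩,
    Subtype.coe_lt_coe.mp (Set.mem_Iio.mp x.2)⟩
  left_inv z := rfl
  right_inv x := rfl
  map_rel_iff' {z z'} := Iff.rfl

theorem iio_iso (κ : Cardinal.{w}) (j : κ.ord.ToType) :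
    ∃ o : Ordinal.{w}, o < κ.ord ∧ Nonempty ({y : κ.ord.ToType // y < j} ≃o o.ToType) := by
  set e := (Ordinal.ToType.mk (o := κ.ord)).symm with he
  exact ⟨(e j).1, (e j).2,
    ⟨((restrictIso e j).trans (iioOrd (e j))).trans (Ordinal.ToType.mk (o := (e j).1))⟩⟩

theorem mk_iio_lt (κ : Cardinal.{w}) (j : κ.ord.ToType) :
    Cardinal.mk {y : κ.ord.ToType // y < j} < κ := by
  obtain ⟨o, ho, ⟨f⟩⟩ := iio_iso κ j
  rw [Cardinal.mk_congr f.toEquiv, Cardinal.mk_toType]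
  exact Cardinal.lt_ord.mp ho

theorem exists_gt_forall_le (κ : Cardinal.{w}) (hκ : Cardinal.aleph0 ≤ κ) (β : κ.ord.ToType) :
    ∃ l, β < l ∧ ∀ k, k < l → k ≤ β := by
  classical
  have hlim : Order.IsSuccLimit κ.ord := Cardinal.isSuccLimit_ord hκ
  set e := Ordinal.ToType.mk (o := κ.ord) with he
  have hub : ∃ l : κ.ord.ToType, β < l := by
    have hmem : Order.succ (e.symm β).1 ∈ Set.Iio κ.ord :=
      Set.mem_Iio.mpr (hlim.succ_lt (Set.mem_Iio.mp (e.symm β).2))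
    refine ⟨e ⟨Order.succ (e.symm β).1, hmem⟩, ?_⟩
    have h1 : e.symm β < ⟨Order.succ (e.symm β).1, hmem⟩ :=
      Subtype.coe_lt_coe.mp (Order.lt_succ _)
    calc β = e (e.symm β) := (e.apply_symm_apply β).symm
    _ < _ := e.strictMono h1
  have hwf : WellFounded ((· < ·) : κ.ord.ToType → κ.ord.ToType → Prop) :=
    IsWellFounded.wf
  refine ⟨hwf.min {l | β < l} hub, hwf.min_mem {l | β < l} hub, fun k hk => ?_⟩
  by_contra hkb
  exact hwf.not_lt_min {l | β < l} (lt_of_not_ge hkb) hk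

theorem sched {κ : Cardinal.{w}} (hκ : κ.IsRegular) {T : Type w} (hT : Cardinal.mk T ≤ κ)
    (ht : Nonempty T) :
    ∃ σ : κ.ord.ToType → T, ∀ (t : T) (j : κ.ord.ToType), ∃ β, j ≤ β ∧ σ β = t := by
  classical
  have hα : Cardinal.mk κ.ord.ToType = κ := by rw [Cardinal.mk_toType, Cardinal.card_ord]
  have hTA : Cardinal.mk (T × κ.ord.ToType) ≤ Cardinal.mk κ.ord.ToType := by
    rw [Cardinal.mk_prod, Cardinal.lift_id, Cardinal.lift_id, hα]
    calc Cardinal.mk T * κ ≤ κ * κ := mul_le_mul_left hT κ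
    _ = κ := Cardinal.mul_eq_self hκ.aleph0_le
  obtain ⟨emb⟩ := Cardinal.le_def _ _ |>.mp hTA
  refine ⟨fun a => if h : ∃ p, emb p = a then h.choose.1 else ht.some, fun t j => ?_⟩
  by_contra hcon
  push_neg at hcon
  have hval : ∀ x : κ.ord.ToType,
      (if h : ∃ p, emb p = emb (t, x) then h.choose.1 else ht.some) = t := by
    intro x
    have hex : ∃ p, emb p = emb (t, x) := ⟨(t, x), rfl⟩
    rw [dif_pos hex]
    have h2 := emb.injective hex.choose_spec
    rw [h2]
  have hlt : ∀ x : κ.ord.ToType, emb (t, x) < j := by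
    intro x
    by_contra hge
    exact hcon (emb (t, x)) (le_of_not_gt hge) (hval x)
  have hinj : Function.Injective
      (fun x : κ.ord.ToType => (⟨emb (t, x), hlt x⟩ : {y : κ.ord.ToType // y < j})) := by
    intro a b hab
    have h3 := emb.injective (congrArg Subtype.val hab)
    exact (Prod.mk.injEq _ _ _ _ ▸ h3 : _ ∧ _).2
  have hle : κ ≤ Cardinal.mk {y : κ.ord.ToType // y < j} := by
    have h4 := Cardinal.mk_le_of_injective hinj
    rwa [hα] at h4
  exact absurd (hle.trans_lt (mk_iio_lt κ j)) (lt_irrefl κ)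

end Helpers

/-- If `κ` is an infinite regular cardinal, `C` is a `κ`-bounded category
satisfying AP and JEP with a dominating family of morphisms of cardinality `≤ κ`, and
`i : C ⥤ D` is a fully faithful embedding such that `D` has colimits of all `κ`-chains with
values in the image of `C` and every object of `C` is `κ`-small in `D`, then there is an
object of `D_κ` which is `C`-homogeneous and `C`-universal. -/
theorem statement_0 {C : Type u₁} [Category.{v₁} C] {D : Type u₂} [Category.{v₂} D]
    (κ : Cardinal.{max u₁ v₁}) (hκ : κ.IsRegular)
    (hbd : IsBounded κ C) (hAP : AP C) (hJEP : JEP C)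
    (F : Set (Mor C)) (hdom : Dominating F) (hcard : Cardinal.mk F ≤ κ)
    (i : C ⥤ D) (hfull : i.Full) (hfaith : i.Faithful)
    (hcolim : ∀ U : κ.ord.ToType ⥤ C, HasColimit (U ⋙ i))
    (hsmall : ∀ a : C, KappaSmall κ i a) :
    ∃ u : D, InDk κ i u ∧ IsHomog i u ∧ IsUniv i u := by
  classical
  have hκ0 : Cardinal.aleph0 ≤ κ := hκ.aleph0_le
  have hord0 : (0 : Ordinal.{max u₁ v₁}) < κ.ord := by
    rw [Cardinal.lt_ord, Ordinal.card_zero]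
    exact hκ.pos
  obtain ⟨cc0⟩ := hbd 0 hord0
    { obj := fun x => (IsEmpty.false x).elim
      map := fun {X Y} _ => (IsEmpty.false X).elim
      map_id := fun X => (IsEmpty.false X).elim
      map_comp := fun {X Y Z} _ _ => (IsEmpty.false X).elim }
  obtain ⟨s₀, hs₀, -⟩ := hdom.1 cc0.pt
  -- the schedule of tasks
  have hTcard : Cardinal.mk ((↥F × κ.ord.ToType) ⊕ ↥F) ≤ κ := by
    have hα : Cardinal.mk κ.ord.ToType = κ := by
      rw [Cardinal.mk_toType, Cardinal.card_ord]
    rw [Cardinal.mk_sum, Cardinal.lift_id, Cardinal.lift_id, Cardinal.mk_prod,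
      Cardinal.lift_id, Cardinal.lift_id, hα]
    calc Cardinal.mk ↥F * κ + Cardinal.mk ↥F ≤ κ * κ + κ :=
          add_le_add (mul_le_mul_left hcard κ) hcard
    _ = κ + κ := by rw [Cardinal.mul_eq_self hκ0]
    _ = κ := Cardinal.add_eq_self hκ0
  obtain ⟨σ, hσ⟩ := sched hκ hTcard ⟨Sum.inr ⟨s₀, hs₀⟩⟩
  -- cocones for limit stages
  have hlc : ∀ (j : κ.ord.ToType) (H : {m : κ.ord.ToType // m < j} ⥤ C),
      ∃ cc : Cocone H, ∃ s ∈ F, s.1 = cc.pt := by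
    intro j H
    obtain ⟨o, ho, ⟨iso⟩⟩ := iio_iso κ j
    obtain ⟨cc1⟩ := hbd o ho (iso.symm.equivalence.functor ⋙ H)
    let cc2 : Cocone H := (Cocones.whiskeringEquivalence iso.symm.equivalence).inverse.obj cc1
    obtain ⟨s, hs, ⟨g⟩⟩ := hdom.1 cc2.pt
    refine ⟨⟨s.1, ⟨fun m => cc2.ι.app m ≫ g, fun m m' f => ?_⟩⟩, s, hs, rfl⟩
    dsimp
    rw [← Category.assoc, cc2.w f, Category.comp_id]
  choose lc hlcF using hlc
  -- the successor steps
  have hnx : ∀ (β : κ.ord.ToType) (S : Sys κ.ord.ToType C β),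
      ∃ (c : C) (p : S.top ⟶ c),
        (∃ s ∈ F, s.1 = c) ∧
        (∀ s : ↥F, σ β = Sum.inr s → Nonempty (s.1.1 ⟶ c)) ∧
        (∀ (φ : ↥F) (jj : κ.ord.ToType), σ β = Sum.inl (φ, jj) →
          ∀ (hj : jj < β) (h : φ.1.1 = S.obj jj hj),
            ∃ w : φ.1.2.1 ⟶ c, eqToHom h ≫ S.leg jj hj ≫ p = φ.1.2.2 ≫ w) := by
    intro β S
    rcases hσt : σ β with p | s
    · obtain ⟨φ, jj⟩ := p
      by_cases hcond : ∃ hj : jj < β, φ.1.1 = S.obj jj hj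
      · obtain ⟨hj, h⟩ := hcond
        obtain ⟨d, f', g', hap⟩ := hAP φ.1.2.2 (eqToHom h ≫ S.leg jj hj)
        obtain ⟨s', hs', ⟨e2⟩⟩ := hdom.1 d
        refine ⟨s'.1, g' ≫ e2, ⟨s', hs', rfl⟩, ?_, ?_⟩
        · intro s hsr; simp at hsr
        · intro φ' jj' hβ' hj' h'
          have hpq : φ = φ' ∧ jj = jj' := by simpa using hβ'
          obtain ⟨rfl, rfl⟩ := hpq
          refine ⟨f' ≫ e2, ?_⟩
          have h6 : eqToHom h' ≫ S.leg jj hj' ≫ g' ≫ e2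
              = ((eqToHom h ≫ S.leg jj hj) ≫ g') ≫ e2 := by
            simp only [Category.assoc]
          rw [h6, ← hap]
          simp only [Category.assoc]
      · obtain ⟨s', hs', ⟨e2⟩⟩ := hdom.1 S.top
        refine ⟨s'.1, e2, ⟨s', hs', rfl⟩, ?_, ?_⟩
        · intro s hsr; simp at hsr
        · intro φ' jj' hβ' hj' h'
          have hpq : φ = φ' ∧ jj = jj' := by simpa using hβ'
          obtain ⟨rfl, rfl⟩ := hpq
          exact absurd ⟨hj', h'⟩ hcond
    · obtain ⟨c', ⟨q1⟩, ⟨q2⟩⟩ := hJEP S.top s.1.1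
      obtain ⟨s', hs', ⟨e2⟩⟩ := hdom.1 c'
      refine ⟨s'.1, q1 ≫ e2, ⟨s', hs', rfl⟩, ?_, ?_⟩
      · intro s'' hsr
        have hss : s = s'' := by simpa using hsr
        subst hss
        exact ⟨q2 ≫ e2⟩
      · intro φ' jj' hβ' hj' h'
        simp at hβ'
  choose nxc nxp nxspec using hnx
  set nx : ∀ (β : κ.ord.ToType) (S : Sys κ.ord.ToType C β), Σ c : C, S.top ⟶ c :=
    fun β S => ⟨nxc β S, nxp β S⟩ with hnxdef
  -- membership of all chain objects in domains of F
  have hInv : ∀ j, ∃ s ∈ F, s.1 = chainObj cc0.pt nx lc j := by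
    intro j
    by_cases hmax : ∃ b, b < j ∧ ∀ l, l < j → l ≤ b
    · obtain ⟨β, hβ, hub⟩ := hmax
      obtain ⟨e, -⟩ := Ssys_succ cc0.pt nx lc j β hβ hub
      rw [e]
      exact (nxspec β (Ssys cc0.pt nx lc β)).1
    · obtain ⟨H, e⟩ := Ssys_limit cc0.pt nx lc j hmax
      rw [e]
      exact hlcF j H
  have hnonempty : Nonempty κ.ord.ToType :=
    Ordinal.toType_nonempty_iff_ne_zero.mpr (by
      intro h0; rw [h0] at hord0; exact lt_irrefl _ hord0)
  choose nxt hnxt1 hnxt2 using exists_gt_forall_le κ hκ0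
  -- cofinal universality of the chain
  have hU1 : ∀ a : C, ∃ j, Nonempty (a ⟶ chainObj cc0.pt nx lc j) := by
    intro a
    obtain ⟨s, hs, ⟨e⟩⟩ := hdom.1 a
    obtain ⟨j₀⟩ := hnonempty
    obtain ⟨β, -, hσβ⟩ := hσ (Sum.inr ⟨s, hs⟩) j₀
    obtain ⟨eo, -⟩ := Ssys_succ cc0.pt nx lc (nxt β) β (hnxt1 β) (hnxt2 β)
    obtain ⟨q⟩ := (nxspec β (Ssys cc0.pt nx lc β)).2.1 ⟨s, hs⟩ hσβ
    exact ⟨nxt β, ⟨e ≫ q ≫ eqToHom eo.symm⟩⟩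
  -- the key extension property of the chain
  have hU2 : ∀ (j : κ.ord.ToType) (x : C) (f : chainObj cc0.pt nx lc j ⟶ x),
      ∃ (l : κ.ord.ToType) (hl : j ≤ l) (g : x ⟶ chainObj cc0.pt nx lc l),
        chainHom cc0.pt nx lc hl = f ≫ g := by
    intro j x f
    obtain ⟨s, hs, hse⟩ := hInv j
    obtain ⟨y, g, hmem⟩ := hdom.2 s hs x (eqToHom hse ≫ f)
    obtain ⟨β, hjβ, hσβ⟩ := hσ (Sum.inl (⟨⟨s.1, y, (eqToHom hse ≫ f) ≫ g⟩, hmem⟩, j)) (nxt j)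
    have hjβ' : j < β := lt_of_lt_of_le (hnxt1 j) hjβ
    have hobj : s.1 = (Ssys cc0.pt nx lc β).obj j hjβ' :=
      hse.trans ((extends_all cc0.pt nx lc β j hjβ').top_eq).symm
    obtain ⟨w, hw⟩ := (nxspec β (Ssys cc0.pt nx lc β)).2.2
      ⟨⟨s.1, y, (eqToHom hse ≫ f) ≫ g⟩, hmem⟩ j hσβ hjβ' hobj
    obtain ⟨eo, heo⟩ := Ssys_succ cc0.pt nx lc (nxt β) β (hnxt1 β) (hnxt2 β)
    refine ⟨nxt β, hjβ'.le.trans (hnxt1 β).le, g ≫ w ≫ eqToHom eo.symm, ?_⟩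
    rw [← chainHom_trans cc0.pt nx lc hjβ'.le (hnxt1 β).le]
    rw [chainHom_lt cc0.pt nx lc hjβ']
    have hb : chainHom cc0.pt nx lc (hnxt1 β).le
        = (nx β (Ssys cc0.pt nx lc β)).2 ≫ eqToHom eo.symm := by
      rw [← heo]
      simp [Category.assoc, eqToHom_trans, eqToHom_self]
    rw [hb]
    have hw' : (Ssys cc0.pt nx lc β).leg j hjβ' ≫ (nx β (Ssys cc0.pt nx lc β)).2
        = eqToHom hobj.symm ≫ ((eqToHom hse ≫ f) ≫ g) ≫ w := by
      have h5 : eqToHom hobj ≫ (Ssys cc0.pt nx lc β).leg j hjβ'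
          ≫ (nx β (Ssys cc0.pt nx lc β)).2 = ((eqToHom hse ≫ f) ≫ g) ≫ w := hw
      rw [← h5]
      simp [eqToHom_trans_assoc, eqToHom_self]
    have hw'' : (Ssys cc0.pt nx lc β).leg j hjβ'
          ≫ (nx β (Ssys cc0.pt nx lc β)).2 ≫ eqToHom eo.symm
        = eqToHom hobj.symm ≫ ((eqToHom hse ≫ f) ≫ g) ≫ w ≫ eqToHom eo.symm := by
      rw [← Category.assoc, hw']
      simp [Category.assoc]
    simp only [Category.assoc]
    rw [hw'']
    simp [eqToHom_trans_assoc, eqToHom_self]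
  -- extension property for arbitrary arrows
  have hExt : ∀ (a b : C) (f : a ⟶ b) (j) (g : a ⟶ chainObj cc0.pt nx lc j),
      ∃ (l : κ.ord.ToType) (hl : j ≤ l) (k : b ⟶ chainObj cc0.pt nx lc l),
        g ≫ chainHom cc0.pt nx lc hl = f ≫ k := by
    intro a b f j g
    obtain ⟨d, f', g', hap⟩ := hAP f g
    obtain ⟨l, hl, w, hw⟩ := hU2 j d g'
    exact ⟨l, hl, f' ≫ w, by rw [hw, ← Category.assoc, ← hap, Category.assoc]⟩
  -- pass to D
  set U : κ.ord.ToType ⥤ C := chainF cc0.pt nx lc with hU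
  haveI := hcolim U
  haveI := hfull
  haveI := hfaith
  refine ⟨colimit (U ⋙ i), ⟨U, colimit.cocone (U ⋙ i), ⟨colimit.isColimit _⟩, rfl⟩, ?_, ?_⟩
  · -- homogeneity
    intro a b jab χ
    haveI : PreservesColimitsOfShape κ.ord.ToType (coyoneda.obj (op (i.obj a))) := hsmall a
    have hcol : IsColimit ((coyoneda.obj (op (i.obj a))).mapCocone
        (colimit.cocone (U ⋙ i))) :=
      isColimitOfPreserves _ (colimit.isColimit (U ⋙ i))
    obtain ⟨m, y, hy⟩ := Types.jointly_surjective_of_isColimit hcol χ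
    obtain ⟨l, hl, k, hk⟩ := hExt a b jab m (i.preimage y)
    refine ⟨i.map k ≫ colimit.ι (U ⋙ i) l, ?_⟩
    have hcw : i.map (chainHom cc0.pt nx lc hl) ≫ colimit.ι (U ⋙ i) l
        = colimit.ι (U ⋙ i) m := colimit.w (U ⋙ i) (homOfLE hl)
    erw [← Category.assoc, ← Functor.map_comp, ← hk, Functor.map_comp, Category.assoc,
      hcw, Functor.map_preimage]
    exact hy
  · -- universality
    intro a
    obtain ⟨j, ⟨e⟩⟩ := hU1 a
    exact ⟨i.map e ≫ colimit.ι (U ⋙ i) j⟩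


end Fraisse
end

section
/- Let κ be an infinite regular cardinal and C a κ-bounded category satisfying the amalgamation property and the joint embedding property, with a dominating family of morphisms of cardinality at most κ. Let i : C → D be a fully faithful embedding such that D has colimits of all κ-chains with values in the image of C and every object of C is κ-small in D. If in addition all morphisms of D_κ^c are monomorphisms (as arrows of D_κ^c), then every C-homogeneous and C-universal object of D_κ^c is C-ultrahomogeneous, and any two C-homogeneous and C-universal objects of D_κ^c are isomorphic. -/
open CategoryTheory CategoryTheory.Limits Opposite

universe w v₁ u₁ v₂ u₂

namespace Fraisse

variable {C : Type u₁} [Category.{v₁} C] {D : Type u₂} [Category.{v₂} D]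

/-! ### Auxiliary development for Statement 1 -/

section Statement1Aux

variable {κ : Cardinal.{w}}

/-- If `t` is minimal then `t` is below everything. -/
theorem minimal_le {α : Type w} [LinearOrder α] {t : α} (h : ∀ s, ¬s < t) (x : α) : t ≤ x :=
  not_lt.1 fun hx => h x hx

/-- In `κ.ord.ToType` with `κ` infinite, every element has a strict upper bound. -/
theorem toType_exists_gt (hκ : Cardinal.aleph0 ≤ κ) (l : κ.ord.ToType) : ∃ x, l < x := by
  have hlim := Cardinal.isSuccLimit_ord hκ
  let e := Ordinal.ToType.mk (o := κ.ord)
  refine ⟨e ⟨Order.succ (e.symm l).1,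
    Set.mem_Iio.2 (hlim.succ_lt (Set.mem_Iio.1 (e.symm l).2))⟩, ?_⟩
  conv_lhs => rw [← e.apply_symm_apply l]
  rw [e.lt_iff_lt, ← Subtype.coe_lt_coe]
  exact Order.lt_succ _

/-- Strict upper bounds for small families in `κ.ord.ToType`, `κ` regular. -/
theorem toType_exists_strict_ub (hκ : κ.IsRegular) {t : κ.ord.ToType}
    (g : {s : κ.ord.ToType // s < t} → κ.ord.ToType) : ∃ B, ∀ s, g s < B := by
  have hlim := Cardinal.isSuccLimit_ord hκ.aleph0_le
  let e := Ordinal.ToType.mk (o := κ.ord)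
  have hsup : (⨆ s : {s : κ.ord.ToType // s < t}, Order.succ ((e.symm (g s)).1)) < κ.ord := by
    apply Ordinal.iSup_lt_ord
    · rw [hκ.cof_eq]
      have h0 := @Ordinal.card_typein κ.ord.ToType (· < ·) isWellOrder_lt t
      rw [← h0]
      exact Cardinal.card_typein_toType_lt κ t
    · exact fun s => hlim.succ_lt (Set.mem_Iio.1 (e.symm (g s)).2)
  refine ⟨e ⟨_, hsup⟩, fun s => ?_⟩
  conv_lhs => rw [← e.apply_symm_apply (g s)]
  rw [e.lt_iff_lt, ← Subtype.coe_lt_coe]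
  exact lt_of_lt_of_le (Order.lt_succ _) (Ordinal.le_iSup _ s)

/-- Every element of `κ.ord.ToType` has a successor. -/
theorem toType_exists_succ (hκ : Cardinal.IsRegular κ) (l : κ.ord.ToType) :
    ∃ t, l < t ∧ ∀ m, m < t → m ≤ l := by
  obtain ⟨x, hx⟩ := toType_exists_gt hκ.aleph0_le l
  have wf : WellFounded ((· < ·) : κ.ord.ToType → κ.ord.ToType → Prop) := IsWellFounded.wf
  refine ⟨wf.min {y | l < y} ⟨x, hx⟩, wf.min_mem _ _, fun m hm => ?_⟩
  by_contra hml
  exact wf.not_lt_min {y | l < y} (not_le.1 hml) hm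

theorem map_split {P : Type*} [Preorder P] {E : Type*} [Category E] (W : P ⥤ E)
    {x y z : P} (hxy : x ≤ y) (hyz : y ≤ z) (hxz : x ≤ z) :
    W.map (homOfLE hxz) = W.map (homOfLE hxy) ≫ W.map (homOfLE hyz) := by
  rw [← W.map_comp, homOfLE_comp]

theorem map_merge₀ {P : Type*} [Preorder P] {E : Type*} [Category E] (W : P ⥤ E)
    {x y z : P} (hxy : x ≤ y) (hyz : y ≤ z) :
    W.map (homOfLE hxy) ≫ W.map (homOfLE hyz) = W.map (homOfLE (hxy.trans hyz)) :=
  (map_split W hxy hyz _).symm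

theorem map_merge {P : Type*} [Preorder P] {E : Type*} [Category E] (W : P ⥤ E)
    {x y z : P} (hxy : x ≤ y) (hyz : y ≤ z) {Q : E} (q : W.obj z ⟶ Q) :
    W.map (homOfLE hxy) ≫ W.map (homOfLE hyz) ≫ q = W.map (homOfLE (hxy.trans hyz)) ≫ q := by
  rw [← Category.assoc, map_merge₀]

theorem map_refl {P : Type*} [Preorder P] {E : Type*} [Category E] (W : P ⥤ E)
    {x : P} (h : x ≤ x) : W.map (homOfLE h) = 𝟙 _ := by
  have : homOfLE h = 𝟙 x := Subsingleton.elim _ _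
  rw [this, W.map_id]

variable {C : Type u₁} [Category.{v₁} C] {D : Type u₂} [Category.{v₂} D]

/-- The constant chain is continuous. -/
theorem continuous_const (a : C) :
    ContinuousChain ((Functor.const κ.ord.ToType).obj a) := by
  intro j hj
  obtain ⟨m0, hm0⟩ := hj.1
  have key : ∀ (s : Cocone (segIncl j ⋙ (Functor.const κ.ord.ToType).obj a))
      (m m' : {m : κ.ord.ToType // m < j}), s.ι.app m = s.ι.app m' := by
    intro s m m'
    rcases le_total m m' with h | h
    · have := s.w (homOfLE h)
      simpa using this.symm
    · have := s.w (homOfLE h)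
      simpa using this
  have happ : ∀ m : {m : κ.ord.ToType // m < j},
      (restrCocone ((Functor.const κ.ord.ToType).obj a) j).ι.app m = 𝟙 a := fun m => rfl
  refine ⟨{ desc := fun s => s.ι.app ⟨m0, hm0⟩
            fac := fun s m => ?_
            uniq := fun s f w => ?_ }⟩
  · exact (Category.id_comp _).trans (key s ⟨m0, hm0⟩ m)
  · exact ((Category.id_comp f).symm.trans (w ⟨m0, hm0⟩)).trans rfl

/-- Every object in the image of `i` lies in `D_κ^c`. -/
theorem inDkc_obj (i : C ⥤ D) (ne : Nonempty κ.ord.ToType) (a : C) :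
    InDkc κ i (i.obj a) := by
  obtain ⟨t0⟩ := ne
  have key : ∀ (s : Cocone ((Functor.const κ.ord.ToType).obj a ⋙ i))
      (p q : κ.ord.ToType), s.ι.app p = s.ι.app q := by
    intro s p q
    rcases le_total p q with h | h
    · have := s.w (homOfLE h)
      simpa using this.symm
    · have := s.w (homOfLE h)
      simpa using this
  refine ⟨(Functor.const κ.ord.ToType).obj a, continuous_const a,
    { pt := i.obj a
      ι := { app := fun _ => 𝟙 _
             naturality := fun p q f => by simp } }, ⟨?_⟩, rfl⟩
  exact { desc := fun s => s.ι.app t0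
          fac := fun s p => (Category.id_comp _).trans (key s t0 p)
          uniq := fun s f w => ((Category.id_comp f).symm.trans (w t0)).trans rfl }

/-- Cancellation in `C` from the mono hypothesis on `D_κ^c`. -/
theorem cancel_i (i : C ⥤ D) (hfaith : i.Faithful) (hmono : AllMonoOn (InDkc κ i))
    (ne : Nonempty κ.ord.ToType) {w : D} (hw : InDkc κ i w) {x b : C} (χ : i.obj b ⟶ w)
    {g h : x ⟶ b} (H : i.map g ≫ χ = i.map h ≫ χ) : g = h := by
  haveI := hfaith
  exact i.map_injective (hmono (inDkc_obj i ne b) hw χ (inDkc_obj i ne x) _ _ H)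

/-- Factorization of a morphism from a `κ`-small object through a stage of the chain. -/
theorem factor_through (i : C ⥤ D) (hfull : i.Full) (hsmall : ∀ a : C, KappaSmall κ i a)
    {W : κ.ord.ToType ⥤ C} {cW : Cocone (W ⋙ i)} (hcW : IsColimit cW) {a : C}
    (χ : i.obj a ⟶ cW.pt) (j₀ : κ.ord.ToType) :
    ∃ (j : κ.ord.ToType) (_ : j₀ ≤ j) (ρ : a ⟶ W.obj j), i.map ρ ≫ cW.ι.app j = χ := by
  haveI := hfull
  haveI : PreservesColimitsOfShape κ.ord.ToType (coyoneda.obj (op (i.obj a))) := hsmall a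
  obtain ⟨j, y, hy⟩ := Types.jointly_surjective_of_isColimit
    (isColimitOfPreserves (coyoneda.obj (op (i.obj a))) hcW) χ
  have hy' : y ≫ cW.ι.app j = χ := hy
  refine ⟨max j₀ j, le_max_left _ _, i.preimage y ≫ W.map (homOfLE (le_max_right j₀ j)), ?_⟩
  rw [i.map_comp, Category.assoc]
  have hw := cW.w (homOfLE (le_max_right j₀ j))
  rw [show ((W ⋙ i).map (homOfLE (le_max_right j₀ j)) : _) =
    i.map (W.map (homOfLE (le_max_right j₀ j))) from rfl] at hw
  rw [hw, i.map_preimage]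
  exact hy'

theorem push_leg (i : C ⥤ D) {W : κ.ord.ToType ⥤ C} (cW : Cocone (W ⋙ i)) {x : C}
    {p q : κ.ord.ToType} (h : p ≤ q) (r : x ⟶ W.obj p) :
    i.map (r ≫ W.map (homOfLE h)) ≫ cW.ι.app q = i.map r ≫ cW.ι.app p := by
  rw [i.map_comp, Category.assoc]
  have hw := cW.w (homOfLE h)
  rw [show ((W ⋙ i).map (homOfLE h) : _) = i.map (W.map (homOfLE h)) from rfl] at hw
  rw [hw]

/-- Extension of a map into a homogeneous colimit along a morphism in `C`,
landing at a stage of the chain. -/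
theorem half_step (i : C ⥤ D) (hfull : i.Full) (hfaith : i.Faithful)
    (hsmall : ∀ a : C, KappaSmall κ i a) (hmono : AllMonoOn (InDkc κ i))
    (ne : Nonempty κ.ord.ToType)
    {W : κ.ord.ToType ⥤ C} {cW : Cocone (W ⋙ i)} (hcW : IsColimit cW)
    (hWd : InDkc κ i cW.pt) (hWh : IsHomog i cW.pt)
    {p : κ.ord.ToType} {b : C} (ψ : W.obj p ⟶ b) (r₀ : κ.ord.ToType) :
    ∃ (r : κ.ord.ToType) (hpr : p ≤ r) (_ : r₀ ≤ r) (φ : b ⟶ W.obj r),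
      ψ ≫ φ = W.map (homOfLE hpr) := by
  obtain ⟨χ', hχ'⟩ := hWh ψ (cW.ι.app p)
  obtain ⟨r, hr, φ, hφ⟩ := factor_through i hfull hsmall hcW χ' (max p r₀)
  refine ⟨r, le_trans (le_max_left _ _) hr, le_trans (le_max_right _ _) hr, φ, ?_⟩
  apply cancel_i i hfaith hmono ne hWd (cW.ι.app r)
  rw [i.map_comp, Category.assoc, hφ, hχ']
  have hw := cW.w (homOfLE (le_trans (le_max_left p r₀) hr))
  rw [show ((W ⋙ i).map (homOfLE (le_trans (le_max_left p r₀) hr)) : _) =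
    i.map (W.map (homOfLE (le_trans (le_max_left p r₀) hr))) from rfl] at hw
  exact hw.symm

/-- The data of one rung of the back-and-forth ladder. -/
structure LadderData {C : Type u₁} [Category.{v₁} C] {κ : Cardinal.{w}}
    (U V : κ.ord.ToType ⥤ C) : Type (max w v₁) where
  a : κ.ord.ToType
  b : κ.ord.ToType
  a' : κ.ord.ToType
  ψ : U.obj a ⟶ V.obj b
  φ : V.obj b ⟶ U.obj a'

/-- Per-rung invariant. -/
def LOk {U V : κ.ord.ToType ⥤ C} (t : κ.ord.ToType) (d : LadderData U V) : Prop :=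
  t ≤ d.a ∧ t ≤ d.b ∧ d.a < d.a' ∧
    ∀ h : d.a ≤ d.a', d.ψ ≫ d.φ = U.map (homOfLE h)

/-- Compatibility between two rungs. -/
def LLink {U V : κ.ord.ToType ⥤ C} (s t : κ.ord.ToType) (ds dt : LadderData U V) : Prop :=
  ds.a < dt.a ∧ ds.b < dt.b ∧ ds.a' ≤ dt.a ∧
    (∀ (h₁ : ds.a ≤ dt.a) (h₂ : ds.b ≤ dt.b),
      U.map (homOfLE h₁) ≫ dt.ψ = ds.ψ ≫ V.map (homOfLE h₂)) ∧
    ((∀ m, m < t → m ≤ s) → ∀ (h₁ : ds.a' ≤ dt.a) (h₂ : ds.b ≤ dt.b),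
      ds.φ ≫ U.map (homOfLE h₁) ≫ dt.ψ = V.map (homOfLE h₂))

open Classical in
/-- The recursion step for the ladder. -/
noncomputable def ladderStep {U V : κ.ord.ToType ⥤ C} (d₀ : LadderData U V)
    (t : κ.ord.ToType) (prior : ∀ s, s < t → LadderData U V) : LadderData U V :=
  if _ : ∀ s, ¬s < t then d₀
  else if h2 : ∃ d, LOk t d ∧ ∀ s (hs : s < t), LLink s t (prior s hs) d then h2.choose
  else d₀

theorem ladderStep_min {U V : κ.ord.ToType ⥤ C} (d₀ : LadderData U V)
    (t : κ.ord.ToType) (prior : ∀ s, s < t → LadderData U V) (hmin : ∀ s, ¬s < t) :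
    ladderStep d₀ t prior = d₀ := by
  unfold ladderStep
  rw [dif_pos hmin]

theorem ladderStep_spec {U V : κ.ord.ToType ⥤ C} (d₀ : LadderData U V)
    (t : κ.ord.ToType) (prior : ∀ s, s < t → LadderData U V) (hmin : ¬∀ s, ¬s < t)
    (hex : ∃ d, LOk t d ∧ ∀ s (hs : s < t), LLink s t (prior s hs) d) :
    LOk t (ladderStep d₀ t prior) ∧
      ∀ s (hs : s < t), LLink s t (prior s hs) (ladderStep d₀ t prior) := by
  unfold ladderStep
  rw [dif_neg hmin, dif_pos hex]
  exact hex.choose_spec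

/-- Existence of the back-and-forth ladder. -/
theorem ladder_exists (hκ : κ.IsRegular) (i : C ⥤ D) (hfull : i.Full) (hfaith : i.Faithful)
    (hsmall : ∀ a : C, KappaSmall κ i a) (hmono : AllMonoOn (InDkc κ i))
    {U V : κ.ord.ToType ⥤ C} (hUcont : ContinuousChain U)
    {cu : Cocone (U ⋙ i)} {cv : Cocone (V ⋙ i)} (hcu : IsColimit cu) (hcv : IsColimit cv)
    (hud : InDkc κ i cu.pt) (hvd : InDkc κ i cv.pt)
    (huh : IsHomog i cu.pt) (hvh : IsHomog i cv.pt)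
    (d₀ : LadderData U V) (hd₀1 : d₀.a < d₀.a')
    (hd₀2 : ∀ h : d₀.a ≤ d₀.a', d₀.ψ ≫ d₀.φ = U.map (homOfLE h)) :
    ∃ X : κ.ord.ToType → LadderData U V,
      (∀ t, (∀ s, ¬s < t) → X t = d₀) ∧ (∀ t, LOk t (X t)) ∧
        ∀ s t, s < t → LLink s t (X s) (X t) := by
  classical
  have ne : Nonempty κ.ord.ToType := ⟨d₀.a⟩
  have wf : WellFounded ((· < ·) : κ.ord.ToType → κ.ord.ToType → Prop) := IsWellFounded.wf
  let X : κ.ord.ToType → LadderData U V := wf.fix (ladderStep d₀)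
  have hXeq : ∀ t, X t = ladderStep d₀ t fun s _ => X s := fun t =>
    wf.fix_eq (ladderStep d₀) t
  have main : ∀ t, LOk t (X t) ∧ ∀ s, s < t → LLink s t (X s) (X t) := by
    have key : ∀ t, (∀ s, s < t → (LOk s (X s) ∧ ∀ m, m < s → LLink m s (X m) (X s))) →
        LOk t (X t) ∧ ∀ s, s < t → LLink s t (X s) (X t) := by
      intro t IH
      by_cases hmin : ∀ s, ¬s < t
      · have hXt : X t = d₀ := by rw [hXeq t]; exact ladderStep_min d₀ t _ hmin
        refine ⟨?_, fun s hs => absurd hs (hmin s)⟩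
        rw [hXt]
        exact ⟨minimal_le hmin _, minimal_le hmin _, hd₀1, hd₀2⟩
      · have hex : ∃ d, LOk t d ∧ ∀ s (hs : s < t), LLink s t (X s) d := by
          by_cases hsucc : ∃ s, s < t ∧ ∀ m, m < t → m ≤ s
          · -- successor case
            obtain ⟨s, hst, hmax⟩ := hsucc
            obtain ⟨hOks, hLs⟩ := IH s hst
            have hsa' : s < (X s).a' := lt_of_le_of_lt hOks.1 hOks.2.2.1
            have hta' : t ≤ (X s).a' := by
              by_contra hlt
              exact absurd (hmax _ (not_le.1 hlt)) (not_le.2 hsa')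
            obtain ⟨x₀, hx₀⟩ := toType_exists_gt hκ.aleph0_le (max (X s).b t)
            obtain ⟨bt, hbb, hbx, ψt, hψt⟩ :=
              half_step i hfull hfaith hsmall hmono ne hcv hvd hvh (X s).φ x₀
            obtain ⟨x₁, hx₁⟩ := toType_exists_gt hκ.aleph0_le (X s).a'
            obtain ⟨at', haa, hax, φt, hφt⟩ :=
              half_step i hfull hfaith hsmall hmono ne hcu hud huh ψt x₁
            have hbst : (X s).b < bt :=
              lt_of_le_of_lt (le_max_left _ _) (lt_of_lt_of_le hx₀ hbx)
            have htbt : t ≤ bt :=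
              le_trans (le_max_right (X s).b t) (le_trans hx₀.le hbx)
            -- key naturality from `s` to the new rung
            have keynat : ∀ (h₁ : (X s).a ≤ (X s).a') (h₂ : (X s).b ≤ bt),
                U.map (homOfLE h₁) ≫ ψt = (X s).ψ ≫ V.map (homOfLE h₂) := by
              intro h₁ h₂
              rw [← hOks.2.2.2 h₁, Category.assoc, hψt]
            refine ⟨⟨(X s).a', bt, at', ψt, φt⟩, ⟨hta', htbt, lt_of_lt_of_le hx₁ hax,
              fun _ => hφt⟩, ?_⟩
            intro m hm
            rcases eq_or_lt_of_le (hmax m hm) with rfl | hms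
            · refine ⟨hOks.2.2.1, hbst, le_refl _, ?_, ?_⟩
              · intro h₁ h₂
                exact keynat h₁ h₂
              · intro _ h₁ h₂
                rw [map_refl U h₁, Category.id_comp]
                exact hψt
            · obtain ⟨hma, hmb, hma', hnat, -⟩ := hLs m hms
              have h2at : (X m).a < (X s).a' := lt_trans hma hOks.2.2.1
              have h2bt : (X m).b < bt := lt_of_lt_of_le hmb hbb
              have h2a' : (X m).a' ≤ (X s).a' := le_trans hma' hOks.2.2.1.le
              refine ⟨h2at, h2bt, le_trans hma' hOks.2.2.1.le, ?_, ?_⟩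
              · intro h₁ h₂
                calc U.map (homOfLE h₁) ≫ ψt
                    = U.map (homOfLE hma.le) ≫ U.map (homOfLE hOks.2.2.1.le) ≫ ψt := by
                      rw [map_merge U hma.le hOks.2.2.1.le]
                  _ = U.map (homOfLE hma.le) ≫ (X s).ψ ≫ V.map (homOfLE hbb) := by
                      rw [keynat hOks.2.2.1.le hbb]
                  _ = ((X m).ψ ≫ V.map (homOfLE hmb.le)) ≫ V.map (homOfLE hbb) := by
                      rw [← Category.assoc, hnat hma.le hmb.le]
                  _ = (X m).ψ ≫ V.map (homOfLE h₂) := by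
                      rw [Category.assoc, map_merge₀ V hmb.le hbb]
              · intro hc
                exact absurd (hc s hst) (not_le.2 hms)
          · -- limit case
            have hne2 : ∃ s, s < t := not_forall_not.1 hmin
            have hnomax : ∀ s, s < t → ∃ m, s < m ∧ m < t := by
              intro s hs
              by_contra hcon
              push_neg at hcon
              refine hsucc ⟨s, hs, fun m hm => ?_⟩
              by_contra hms
              exact absurd hm (not_lt.2 (hcon m (not_le.1 hms)))
            obtain ⟨A₁, hA₁⟩ := toType_exists_strict_ub hκ
              (fun s : {s : κ.ord.ToType // s < t} => (X s.1).a)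
            obtain ⟨B₁, hB₁⟩ := toType_exists_strict_ub hκ
              (fun s : {s : κ.ord.ToType // s < t} => (X s.1).b)
            have hbts : ∀ s, s < t → (X s).b < max B₁ t := fun s hs =>
              lt_of_lt_of_le (hB₁ ⟨s, hs⟩) (le_max_left _ _)
            have hSne : Set.Nonempty {x : κ.ord.ToType | ∀ s, s < t → (X s).a ≤ x} :=
              ⟨A₁, fun s hs => (hA₁ ⟨s, hs⟩).le⟩
            set js := wf.min {x : κ.ord.ToType | ∀ s, s < t → (X s).a ≤ x} hSne with hjsdef
            have hub : ∀ s, s < t → (X s).a ≤ js := wf.min_mem _ hSne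
            have hlub : ∀ m, m < js → ∃ s, ∃ _ : s < t, m < (X s).a := by
              intro m hm
              by_contra hc
              push_neg at hc
              exact wf.not_lt_min {x : κ.ord.ToType | ∀ s, s < t → (X s).a ≤ x} (fun s hs => hc s hs) hm
            have hstrict : ∀ s, s < t → (X s).a < js := by
              intro s hs
              obtain ⟨m, hsm, hmt⟩ := hnomax s hs
              exact lt_of_lt_of_le ((IH m hmt).2 s hsm).1 (hub m hmt)
            have htjs : t ≤ js := by
              by_contra hjt
              obtain ⟨m, h1, h2⟩ := hnomax js (not_le.1 hjt)
              exact absurd (le_trans (IH m h2).1.1 (hub m h2)) (not_le.2 h1)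
            have hjlim : IsLimitElem js := by
              obtain ⟨s0, hs0⟩ := hne2
              refine ⟨⟨(X s0).a, hstrict s0 hs0⟩, fun m hm => ?_⟩
              obtain ⟨s, hs, hms⟩ := hlub m hm
              exact ⟨(X s).a, hms, hstrict s hs⟩
            have WD1 : ∀ (m s₁ s₂ : κ.ord.ToType) (h₁ : s₁ < t) (h₂ : s₂ < t), s₁ ≤ s₂ →
                ∀ (hm₁ : m ≤ (X s₁).a) (hm₂ : m ≤ (X s₂).a),
                U.map (homOfLE hm₁) ≫ (X s₁).ψ ≫ V.map (homOfLE (hbts s₁ h₁).le) =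
                U.map (homOfLE hm₂) ≫ (X s₂).ψ ≫ V.map (homOfLE (hbts s₂ h₂).le) := by
              intro m s₁ s₂ h₁ h₂ hle hm₁ hm₂
              rcases eq_or_lt_of_le hle with rfl | hlt
              · rfl
              · obtain ⟨hma, hmb, -, hnat, -⟩ := (IH s₂ h₂).2 s₁ hlt
                calc U.map (homOfLE hm₁) ≫ (X s₁).ψ ≫ V.map (homOfLE (hbts s₁ h₁).le)
                    = U.map (homOfLE hm₁) ≫ (X s₁).ψ ≫ V.map (homOfLE hmb.le) ≫
                        V.map (homOfLE (hbts s₂ h₂).le) := by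
                      rw [map_merge₀ V hmb.le (hbts s₂ h₂).le]
                  _ = U.map (homOfLE hm₁) ≫ (U.map (homOfLE hma.le) ≫ (X s₂).ψ) ≫
                        V.map (homOfLE (hbts s₂ h₂).le) := by
                      rw [← Category.assoc ((X s₁).ψ), ← hnat hma.le hmb.le]
                  _ = U.map (homOfLE hm₂) ≫ (X s₂).ψ ≫ V.map (homOfLE (hbts s₂ h₂).le) := by
                      rw [← Category.assoc, map_merge U hm₁ hma.le, Category.assoc]
            have WD : ∀ (m s₁ s₂ : κ.ord.ToType) (h₁ : s₁ < t) (h₂ : s₂ < t)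
                (hm₁ : m ≤ (X s₁).a) (hm₂ : m ≤ (X s₂).a),
                U.map (homOfLE hm₁) ≫ (X s₁).ψ ≫ V.map (homOfLE (hbts s₁ h₁).le) =
                U.map (homOfLE hm₂) ≫ (X s₂).ψ ≫ V.map (homOfLE (hbts s₂ h₂).le) := by
              intro m s₁ s₂ h₁ h₂ hm₁ hm₂
              rcases le_total s₁ s₂ with h | h
              · exact WD1 m s₁ s₂ h₁ h₂ h hm₁ hm₂
              · exact (WD1 m s₂ s₁ h₂ h₁ h hm₂ hm₁).symm
            let sel : {m : κ.ord.ToType // m < js} → κ.ord.ToType :=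
              fun m => (hlub m.1 m.2).choose
            have hselt : ∀ m : {m : κ.ord.ToType // m < js}, sel m < t :=
              fun m => (hlub m.1 m.2).choose_spec.choose
            have hsela : ∀ m : {m : κ.ord.ToType // m < js}, m.1 ≤ (X (sel m)).a :=
              fun m => (hlub m.1 m.2).choose_spec.choose_spec.le
            let cc : Cocone (segIncl js ⋙ U) :=
              { pt := V.obj (max B₁ t)
                ι := { app := fun m => U.map (homOfLE (hsela m)) ≫ (X (sel m)).ψ ≫
                         V.map (homOfLE (hbts (sel m) (hselt m)).le)
                       naturality := fun m m' f => by
                         have hmm : m.1 ≤ m'.1 := Subtype.coe_le_coe.2 (leOfHom f)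
                         have h1 : (segIncl js ⋙ U).map f = U.map (homOfLE hmm) :=
                           congrArg U.map (Subsingleton.elim _ _)
                         rw [h1]; refine (map_merge U hmm (hsela m') _).trans ?_
                         exact (WD m.1 (sel m') (sel m) (hselt m') (hselt m)
                           (hmm.trans (hsela m')) (hsela m)).trans (Category.comp_id _).symm } }
            obtain ⟨hrc⟩ := hUcont js hjlim
            have hfac : ∀ m : {m : κ.ord.ToType // m < js},
                U.map (homOfLE m.2.le) ≫ hrc.desc cc = cc.ι.app m := fun m => hrc.fac cc m
            obtain ⟨x₂, hx₂⟩ := toType_exists_gt hκ.aleph0_le js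
            obtain ⟨at', haa, hax, φt, hφt⟩ :=
              half_step i hfull hfaith hsmall hmono ne hcu hud huh (hrc.desc cc) x₂
            refine ⟨⟨js, max B₁ t, at', hrc.desc cc, φt⟩,
              ⟨htjs, le_max_right _ _, lt_of_lt_of_le hx₂ hax, fun _ => hφt⟩, ?_⟩
            intro m hm
            obtain ⟨m2, hmm2, hm2t⟩ := hnomax m hm
            have link2 := (IH m2 hm2t).2 m hmm2
            have hma : (X m).a < js := lt_of_lt_of_le link2.1 (hub m2 hm2t)
            have ha'js : (X m).a' ≤ js := le_trans link2.2.2.1 (hub m2 hm2t)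
            refine ⟨hma, hbts m hm, ha'js, ?_, ?_⟩
            · intro h₁ h₂
              calc U.map (homOfLE h₁) ≫ hrc.desc cc = (show U.obj (X m).a ⟶ V.obj (max B₁ t) from cc.ι.app ⟨(X m).a, hma⟩) :=
                    hfac ⟨(X m).a, hma⟩
                _ = U.map (homOfLE (le_refl (X m).a)) ≫ (X m).ψ ≫
                      V.map (homOfLE (hbts m hm).le) :=
                    WD (X m).a (sel ⟨(X m).a, hma⟩) m (hselt ⟨(X m).a, hma⟩) hm
                      (hsela ⟨(X m).a, hma⟩) (le_refl _)
                _ = (X m).ψ ≫ V.map (homOfLE h₂) := by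
                    rw [map_refl U (le_refl (X m).a), Category.id_comp]
            · intro hc
              obtain ⟨m2', h1, h2⟩ := hnomax m hm
              exact absurd (hc m2' h2) (not_le.2 h1)
        have hXt := ladderStep_spec d₀ t (fun s _ => X s) hmin hex
        rw [← hXeq t] at hXt
        exact ⟨hXt.1, fun s hs => hXt.2 s hs⟩
    exact fun t => wf.induction t key
  exact ⟨X, fun t h => by rw [hXeq t]; exact ladderStep_min d₀ t _ h,
    fun t => (main t).1, fun s t h => (main t).2 s h⟩

/-- The key result: two homogeneous objects of `D_κ^c` are isomorphic over any
common morphism from an object of the image of `C`. -/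
theorem exists_iso (hκ : κ.IsRegular) (i : C ⥤ D) (hfull : i.Full) (hfaith : i.Faithful)
    (hsmall : ∀ a : C, KappaSmall κ i a) (hmono : AllMonoOn (InDkc κ i))
    {u v : D} (hu : InDkc κ i u) (hv : InDkc κ i v)
    (huh : IsHomog i u) (hvh : IsHomog i v)
    (a : C) (χ₁ : i.obj a ⟶ u) (χ₂ : i.obj a ⟶ v) :
    ∃ k : u ≅ v, χ₁ ≫ k.hom = χ₂ := by
  obtain ⟨U, hUc, cu, ⟨hcu⟩, rfl⟩ := hu
  obtain ⟨V, hVc, cv, ⟨hcv⟩, rfl⟩ := hv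
  have hud : InDkc κ i cu.pt := ⟨U, hUc, cu, ⟨hcu⟩, rfl⟩
  have hvd : InDkc κ i cv.pt := ⟨V, hVc, cv, ⟨hcv⟩, rfl⟩
  have ne : Nonempty κ.ord.ToType :=
    Ordinal.toType_nonempty_iff_ne_zero.2 (Cardinal.isSuccLimit_ord hκ.aleph0_le).pos.ne'
  obtain ⟨t₀⟩ := ne
  have wf : WellFounded ((· < ·) : κ.ord.ToType → κ.ord.ToType → Prop) := IsWellFounded.wf
  -- seed
  obtain ⟨a₀, -, ρ, hρ⟩ := factor_through i hfull hsmall hcu χ₁ t₀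
  obtain ⟨χ₂', hχ₂'⟩ := hvh ρ χ₂
  obtain ⟨b₀, -, ψ₀, hψ₀⟩ := factor_through i hfull hsmall hcv χ₂' t₀
  obtain ⟨x₀, hx₀⟩ := toType_exists_gt hκ.aleph0_le a₀
  obtain ⟨a₀', h00, h0x, φ₀, hφ₀⟩ :=
    half_step i hfull hfaith hsmall hmono ⟨t₀⟩ hcu hud huh ψ₀ x₀
  obtain ⟨X, hX0, hOk, hLink⟩ := ladder_exists hκ i hfull hfaith hsmall hmono hUc hcu hcv
    hud hvd huh hvh (⟨a₀, b₀, a₀', ψ₀, φ₀⟩ : LadderData U V)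
    (lt_of_lt_of_le hx₀ h0x) (fun _ => hφ₀)
  -- derived monotonicity and naturality
  have amono : ∀ {s t : κ.ord.ToType}, s ≤ t → (X s).a ≤ (X t).a := by
    intro s t h
    rcases eq_or_lt_of_le h with rfl | h
    exacts [le_refl _, (hLink s t h).1.le]
  have bmono : ∀ {s t : κ.ord.ToType}, s ≤ t → (X s).b ≤ (X t).b := by
    intro s t h
    rcases eq_or_lt_of_le h with rfl | h
    exacts [le_refl _, (hLink s t h).2.1.le]
  have a'mono : ∀ {s t : κ.ord.ToType}, s ≤ t → (X s).a' ≤ (X t).a' := by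
    intro s t h
    rcases eq_or_lt_of_le h with rfl | h
    exacts [le_refl _, le_trans (hLink s t h).2.2.1 (hOk t).2.2.1.le]
  have natle : ∀ (s t : κ.ord.ToType), s ≤ t →
      ∀ (h₁ : (X s).a ≤ (X t).a) (h₂ : (X s).b ≤ (X t).b),
      U.map (homOfLE h₁) ≫ (X t).ψ = (X s).ψ ≫ V.map (homOfLE h₂) := by
    intro s t h h₁ h₂
    rcases eq_or_lt_of_le h with rfl | h
    · rw [map_refl U h₁, Category.id_comp, map_refl V h₂, Category.comp_id]
    · exact (hLink s t h).2.2.2.1 h₁ h₂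
  have succlink : ∀ l z : κ.ord.ToType, l < z →
      ∀ (hz1 : (X l).a' ≤ (X z).a) (hz2 : (X l).b ≤ (X z).b),
      (X l).φ ≫ U.map (homOfLE hz1) ≫ (X z).ψ = V.map (homOfLE hz2) := by
    intro l z hlz hz1 hz2
    obtain ⟨l', hll', hmin'⟩ := toType_exists_succ hκ l
    have hl'z : l' ≤ z := by
      by_contra hc
      exact absurd (hmin' z (not_le.1 hc)) (not_le.2 hlz)
    have L1 := hLink l l' hll'
    have key1 := L1.2.2.2.2 hmin' L1.2.2.1 L1.2.1.le
    have ha2 : (X l').a ≤ (X z).a := amono hl'z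
    calc (X l).φ ≫ U.map (homOfLE hz1) ≫ (X z).ψ
        = (X l).φ ≫ U.map (homOfLE L1.2.2.1) ≫ U.map (homOfLE ha2) ≫ (X z).ψ := by
          rw [map_merge U L1.2.2.1 ha2]
      _ = (X l).φ ≫ U.map (homOfLE L1.2.2.1) ≫ (X l').ψ ≫ V.map (homOfLE (bmono hl'z)) := by
          rw [natle l' z hl'z ha2 (bmono hl'z)]
      _ = ((X l).φ ≫ U.map (homOfLE L1.2.2.1) ≫ (X l').ψ) ≫ V.map (homOfLE (bmono hl'z)) := by
          simp only [Category.assoc]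
      _ = V.map (homOfLE L1.2.1.le) ≫ V.map (homOfLE (bmono hl'z)) := by rw [key1]
      _ = V.map (homOfLE hz2) := map_merge₀ V L1.2.1.le (bmono hl'z)
  have phinat : ∀ (l m : κ.ord.ToType), l ≤ m →
      ∀ (h₁ : (X l).b ≤ (X m).b) (h₂ : (X l).a' ≤ (X m).a'),
      V.map (homOfLE h₁) ≫ (X m).φ = (X l).φ ≫ U.map (homOfLE h₂) := by
    intro l m h h₁ h₂
    rcases eq_or_lt_of_le h with rfl | hlt
    · rw [map_refl V h₁, Category.id_comp, map_refl U h₂, Category.comp_id]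
    · have L := hLink l m hlt
      calc V.map (homOfLE h₁) ≫ (X m).φ
          = ((X l).φ ≫ U.map (homOfLE L.2.2.1) ≫ (X m).ψ) ≫ (X m).φ := by
            rw [succlink l m hlt L.2.2.1 h₁]
        _ = (X l).φ ≫ U.map (homOfLE L.2.2.1) ≫ ((X m).ψ ≫ (X m).φ) := by
            simp only [Category.assoc]
        _ = (X l).φ ≫ U.map (homOfLE L.2.2.1) ≫ U.map (homOfLE (hOk m).2.2.1.le) :=
            congrArg (fun q => (X l).φ ≫ (U.map (homOfLE L.2.2.1) ≫ q))
              ((hOk m).2.2.2 (hOk m).2.2.1.le)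
        _ = (X l).φ ≫ U.map (homOfLE h₂) := by
            rw [map_merge₀ U L.2.2.1 (hOk m).2.2.1.le]
  have haj : ∀ j : κ.ord.ToType, j ≤ (X j).a := fun j => (hOk j).1
  have hbj : ∀ j : κ.ord.ToType, j ≤ (X j).b := fun j => (hOk j).2.1
  -- the forward cocone
  let fc : Cocone (U ⋙ i) :=
    { pt := cv.pt
      ι := { app := fun j => i.map (U.map (homOfLE (haj j)) ≫ (X j).ψ) ≫ cv.ι.app ((X j).b)
             naturality := fun j l f => by
               have hjl : j ≤ l := leOfHom f
               have kc : U.map (homOfLE hjl) ≫ U.map (homOfLE (haj l)) ≫ (X l).ψ =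
                   (U.map (homOfLE (haj j)) ≫ (X j).ψ) ≫ V.map (homOfLE (bmono hjl)) := by
                 calc U.map (homOfLE hjl) ≫ U.map (homOfLE (haj l)) ≫ (X l).ψ
                     = U.map (homOfLE (hjl.trans (haj l))) ≫ (X l).ψ :=
                       map_merge U hjl (haj l) _
                   _ = U.map (homOfLE (haj j)) ≫ U.map (homOfLE (amono hjl)) ≫ (X l).ψ :=
                       (map_merge U (haj j) (amono hjl) _).symm
                   _ = U.map (homOfLE (haj j)) ≫ ((X j).ψ ≫ V.map (homOfLE (bmono hjl))) := by
                       rw [natle j l hjl (amono hjl) (bmono hjl)]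
                   _ = (U.map (homOfLE (haj j)) ≫ (X j).ψ) ≫ V.map (homOfLE (bmono hjl)) := by
                       simp only [Category.assoc]
               have h1 : (U ⋙ i).map f = i.map (U.map (homOfLE hjl)) :=
                 congrArg i.map (congrArg U.map (Subsingleton.elim _ _))
               refine Eq.trans ?_ (Category.comp_id _).symm
               rw [h1, ← Category.assoc, ← i.map_comp, kc]
               exact push_leg i cv (bmono hjl) (U.map (homOfLE (haj j)) ≫ (X j).ψ) } }
  let f : cu.pt ⟶ cv.pt := hcu.desc fc
  have hf : ∀ j, cu.ι.app j ≫ f =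
      i.map (U.map (homOfLE (haj j)) ≫ (X j).ψ) ≫ cv.ι.app ((X j).b) :=
    fun j => hcu.fac fc j
  -- the backward cocone
  let gc : Cocone (V ⋙ i) :=
    { pt := cu.pt
      ι := { app := fun l => i.map (V.map (homOfLE (hbj l)) ≫ (X l).φ) ≫ cu.ι.app ((X l).a')
             naturality := fun l m f => by
               have hlm : l ≤ m := leOfHom f
               have kc : V.map (homOfLE hlm) ≫ V.map (homOfLE (hbj m)) ≫ (X m).φ =
                   (V.map (homOfLE (hbj l)) ≫ (X l).φ) ≫ U.map (homOfLE (a'mono hlm)) := by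
                 calc V.map (homOfLE hlm) ≫ V.map (homOfLE (hbj m)) ≫ (X m).φ
                     = V.map (homOfLE (hlm.trans (hbj m))) ≫ (X m).φ :=
                       map_merge V hlm (hbj m) _
                   _ = V.map (homOfLE (hbj l)) ≫ V.map (homOfLE (bmono hlm)) ≫ (X m).φ :=
                       (map_merge V (hbj l) (bmono hlm) _).symm
                   _ = V.map (homOfLE (hbj l)) ≫ ((X l).φ ≫ U.map (homOfLE (a'mono hlm))) := by
                       rw [phinat l m hlm (bmono hlm) (a'mono hlm)]
                   _ = (V.map (homOfLE (hbj l)) ≫ (X l).φ) ≫ U.map (homOfLE (a'mono hlm)) := by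
                       simp only [Category.assoc]
               have h1 : (V ⋙ i).map f = i.map (V.map (homOfLE hlm)) :=
                 congrArg i.map (congrArg V.map (Subsingleton.elim _ _))
               refine Eq.trans ?_ (Category.comp_id _).symm
               rw [h1, ← Category.assoc, ← i.map_comp, kc]
               exact push_leg i cu (a'mono hlm) (V.map (homOfLE (hbj l)) ≫ (X l).φ) } }
  let g : cv.pt ⟶ cu.pt := hcv.desc gc
  have hg : ∀ l, cv.ι.app l ≫ g =
      i.map (V.map (homOfLE (hbj l)) ≫ (X l).φ) ≫ cu.ι.app ((X l).a') :=
    fun l => hcv.fac gc l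
  -- f ≫ g = 𝟙
  have hfg : f ≫ g = 𝟙 cu.pt := by
    refine hcu.hom_ext fun j => Eq.trans ?_ (Category.comp_id _).symm
    rw [← Category.assoc, hf j, Category.assoc, hg ((X j).b)]
    have hjw : j ≤ (X j).b := hbj j
    have kc : (U.map (homOfLE (haj j)) ≫ (X j).ψ) ≫
        V.map (homOfLE (hbj ((X j).b))) ≫ (X ((X j).b)).φ =
        U.map (homOfLE ((haj j).trans ((amono hjw).trans
          (hOk ((X j).b)).2.2.1.le))) := by
      calc (U.map (homOfLE (haj j)) ≫ (X j).ψ) ≫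
          V.map (homOfLE (hbj ((X j).b))) ≫ (X ((X j).b)).φ
          = U.map (homOfLE (haj j)) ≫ ((X j).ψ ≫ V.map (homOfLE (hbj ((X j).b)))) ≫
            (X ((X j).b)).φ := by simp only [Category.assoc]
        _ = U.map (homOfLE (haj j)) ≫ (U.map (homOfLE (amono hjw)) ≫ (X ((X j).b)).ψ) ≫
            (X ((X j).b)).φ := by
            rw [natle j ((X j).b) hjw (amono hjw) (hbj ((X j).b))]
        _ = U.map (homOfLE (haj j)) ≫ U.map (homOfLE (amono hjw)) ≫
            ((X ((X j).b)).ψ ≫ (X ((X j).b)).φ) := by simp only [Category.assoc]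
        _ = U.map (homOfLE (haj j)) ≫ U.map (homOfLE (amono hjw)) ≫
            U.map (homOfLE (hOk ((X j).b)).2.2.1.le) :=
            congrArg (fun q => U.map (homOfLE (haj j)) ≫ (U.map (homOfLE (amono hjw)) ≫ q))
              ((hOk ((X j).b)).2.2.2 (hOk ((X j).b)).2.2.1.le)
        _ = _ := by rw [map_merge₀ U (amono hjw) (hOk ((X j).b)).2.2.1.le,
            map_merge₀ U (haj j) ((amono hjw).trans (hOk ((X j).b)).2.2.1.le)]
    rw [← Category.assoc, ← i.map_comp]
    rw [show (U.map (homOfLE (haj j)) ≫ (X j).ψ) ≫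
        (V.map (homOfLE (hbj ((X j).b))) ≫ (X ((X j).b)).φ) =
        U.map (homOfLE ((haj j).trans ((amono hjw).trans
          (hOk ((X j).b)).2.2.1.le))) from kc]
    have hw := cu.w (homOfLE ((haj j).trans ((amono hjw).trans (hOk ((X j).b)).2.2.1.le)))
    rw [show ((U ⋙ i).map (homOfLE ((haj j).trans ((amono hjw).trans
      (hOk ((X j).b)).2.2.1.le))) : _) = i.map (U.map (homOfLE ((haj j).trans ((amono hjw).trans
      (hOk ((X j).b)).2.2.1.le)))) from rfl] at hw
    exact hw
  -- g ≫ f = 𝟙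
  have hgf : g ≫ f = 𝟙 cv.pt := by
    refine hcv.hom_ext fun l => Eq.trans ?_ (Category.comp_id _).symm
    rw [← Category.assoc, hg l, Category.assoc, hf ((X l).a')]
    have hlz : l < (X l).a' := lt_of_le_of_lt (hOk l).1 (hOk l).2.2.1
    have kc : (V.map (homOfLE (hbj l)) ≫ (X l).φ) ≫
        U.map (homOfLE (haj ((X l).a'))) ≫ (X ((X l).a')).ψ =
        V.map (homOfLE ((hbj l).trans (bmono hlz.le))) := by
      calc (V.map (homOfLE (hbj l)) ≫ (X l).φ) ≫
          U.map (homOfLE (haj ((X l).a'))) ≫ (X ((X l).a')).ψ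
          = V.map (homOfLE (hbj l)) ≫ ((X l).φ ≫ U.map (homOfLE (haj ((X l).a'))) ≫
            (X ((X l).a')).ψ) := by simp only [Category.assoc]
        _ = V.map (homOfLE (hbj l)) ≫ V.map (homOfLE (bmono hlz.le)) := by
            rw [succlink l ((X l).a') hlz (haj ((X l).a')) (bmono hlz.le)]
        _ = _ := map_merge₀ V (hbj l) (bmono hlz.le)
    rw [← Category.assoc, ← i.map_comp]
    rw [show (V.map (homOfLE (hbj l)) ≫ (X l).φ) ≫
        (U.map (homOfLE (haj ((X l).a'))) ≫ (X ((X l).a')).ψ) =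
        V.map (homOfLE ((hbj l).trans (bmono hlz.le))) from kc]
    have hw := cv.w (homOfLE ((hbj l).trans (bmono hlz.le)))
    rw [show ((V ⋙ i).map (homOfLE ((hbj l).trans (bmono hlz.le))) : _) =
      i.map (V.map (homOfLE ((hbj l).trans (bmono hlz.le)))) from rfl] at hw
    exact hw
  -- the seed equation
  have hseed : χ₁ ≫ f = χ₂ := by
    rw [← hρ, Category.assoc, hf a₀]
    have hmint : ∀ s, ¬s < wf.min Set.univ ⟨t₀, trivial⟩ := fun s hs =>
      wf.not_lt_min Set.univ (Set.mem_univ s) hs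
    have hXm : X (wf.min Set.univ ⟨t₀, trivial⟩) = ⟨a₀, b₀, a₀', ψ₀, φ₀⟩ := hX0 _ hmint
    have hle : wf.min Set.univ ⟨t₀, trivial⟩ ≤ a₀ := minimal_le hmint a₀
    have hb : ∀ d : LadderData U V, X (wf.min Set.univ ⟨t₀, trivial⟩) = d →
        d.b ≤ (X a₀).b := by rintro d rfl; exact bmono hle
    have natseed : ∀ d : LadderData U V, X (wf.min Set.univ ⟨t₀, trivial⟩) = d →
        ∀ (h₁ : d.a ≤ (X a₀).a) (h₂ : d.b ≤ (X a₀).b),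
        U.map (homOfLE h₁) ≫ (X a₀).ψ = d.ψ ≫ V.map (homOfLE h₂) := by
      rintro d rfl h₁ h₂
      exact natle _ a₀ hle h₁ h₂
    have ns := natseed _ hXm (haj a₀) (hb _ hXm)
    rw [ns, push_leg i cv (hb _ hXm) ψ₀, hψ₀]
    exact hχ₂'
  exact ⟨⟨f, g, hfg, hgf⟩, hseed⟩

end Statement1Aux

/-- Under the hypotheses of Statement 0, if moreover all morphisms of
`D_κ^c` are monomorphisms (as arrows of `D_κ^c`), then every `C`-homogeneous and
`C`-universal object of `D_κ^c` is `C`-ultrahomogeneous, and any two `C`-homogeneous and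
`C`-universal objects of `D_κ^c` are isomorphic. -/
theorem statement_1 {C : Type u₁} [Category.{v₁} C] {D : Type u₂} [Category.{v₂} D]
    (κ : Cardinal.{max u₁ v₁}) (hκ : κ.IsRegular)
    (hbd : IsBounded κ C) (hAP : AP C) (hJEP : JEP C)
    (F : Set (Mor C)) (hdom : Dominating F) (hcard : Cardinal.mk F ≤ κ)
    (i : C ⥤ D) (hfull : i.Full) (hfaith : i.Faithful)
    (hcolim : ∀ U : κ.ord.ToType ⥤ C, HasColimit (U ⋙ i))
    (hsmall : ∀ a : C, KappaSmall κ i a)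
    (hmono : AllMonoOn (InDkc κ i)) :
    (∀ u : D, InDkc κ i u → IsHomog i u → IsUniv i u → IsUltrahomog i u) ∧
    (∀ u v : D, InDkc κ i u → IsHomog i u → IsUniv i u →
      InDkc κ i v → IsHomog i v → IsUniv i v → Nonempty (u ≅ v)) := by
  constructor
  · intro u hu huh _ a b j χ₁ χ₂
    obtain ⟨k, hk⟩ := exists_iso hκ i hfull hfaith hsmall hmono hu hu huh huh a χ₁
      (i.map j ≫ χ₂)
    exact ⟨k, hk⟩
  · intro u v hu huh _ hv hvh hvu
    obtain ⟨U, hUc, cu, ⟨hcu⟩, hpt⟩ := id hu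
    have ne : Nonempty κ.ord.ToType :=
      Ordinal.toType_nonempty_iff_ne_zero.2 (Cardinal.isSuccLimit_ord hκ.aleph0_le).pos.ne'
    obtain ⟨t0⟩ := ne
    obtain ⟨χ₂⟩ := hvu (U.obj t0)
    obtain ⟨k, -⟩ := exists_iso hκ i hfull hfaith hsmall hmono hu hv huh hvh (U.obj t0)
      (hpt ▸ cu.ι.app t0) χ₂
    exact ⟨k⟩

end Fraisse
end

section
/- Let κ be an infinite regular cardinal and i : C → D a fully faithful embedding such that every object of C is κ-small in D and all morphisms of D_κ are monomorphisms. If there exists an object of D_κ that is C-homogeneous and C-universal, then the category C satisfies both the amalgamation property and the joint embedding property. -/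
open CategoryTheory CategoryTheory.Limits Opposite

universe w v₁ u₁ v₂ u₂

namespace Fraisse

variable {C : Type u₁} [Category.{v₁} C] {D : Type u₂} [Category.{v₂} D]

lemma const_app_eq {α : Type w} [LinearOrder α] (i : C ⥤ D) (b : C)
    (s : Cocone ((Functor.const α).obj b ⋙ i)) (j j' : α) :
    s.ι.app j = s.ι.app j' := by
  rcases le_total j j' with h | h
  · have := s.w (homOfLE h)
    simpa using this.symm
  · have := s.w (homOfLE h)
    simpa using this

lemma const_inDk (κ : Cardinal.{w}) (hne : Nonempty κ.ord.ToType) (i : C ⥤ D) (b : C) :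
    InDk κ i (i.obj b) := by
  refine ⟨(Functor.const _).obj b,
    { pt := i.obj b
      ι := { app := fun _ => 𝟙 _, naturality := by intros; simp } }, ⟨?_⟩, rfl⟩
  refine { desc := fun s => s.ι.app (Classical.arbitrary _),
           fac := fun s j => ?_, uniq := fun s m hm => ?_ }
  · simpa using const_app_eq i b s (Classical.arbitrary _) j
  · simpa using hm (Classical.arbitrary _)

lemma factor_through_s2 (κ : Cardinal.{w}) (i : C ⥤ D) {a : C} (hsmall : KappaSmall κ i a)
    {U : κ.ord.ToType ⥤ C} {c : Cocone (U ⋙ i)} (hc : IsColimit c)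
    (χ : i.obj a ⟶ c.pt) :
    ∃ (j : κ.ord.ToType) (φ : i.obj a ⟶ i.obj (U.obj j)), φ ≫ c.ι.app j = χ := by
  haveI : PreservesColimitsOfShape κ.ord.ToType (coyoneda.obj (op (i.obj a))) := hsmall
  have h2 := isColimitOfPreserves (coyoneda.obj (op (i.obj a))) hc
  obtain ⟨j, y, hy⟩ := Types.jointly_surjective _ h2 χ
  exact ⟨j, y, hy⟩

/-- If `κ` is an infinite regular cardinal and `i : C ⥤ D` a fully
faithful embedding such that every object of `C` is `κ`-small in `D` and all morphisms of
`D_κ` are monomorphisms, and there exists a `C`-homogeneous and `C`-universal object of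
`D_κ`, then `C` satisfies the amalgamation and joint embedding properties. -/
theorem statement_2 {C : Type u₁} [Category.{v₁} C] {D : Type u₂} [Category.{v₂} D]
    (κ : Cardinal.{w}) (hκ : κ.IsRegular)
    (i : C ⥤ D) (hfull : i.Full) (hfaith : i.Faithful)
    (hsmall : ∀ a : C, KappaSmall κ i a)
    (hmono : AllMonoOn (InDk κ i))
    (hex : ∃ u : D, InDk κ i u ∧ IsHomog i u ∧ IsUniv i u) :
    AP C ∧ JEP C := by
  haveI := hfull; haveI := hfaith
  obtain ⟨u, ⟨U, c, ⟨hc⟩, hpt⟩, hhom, huniv⟩ := hex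
  subst hpt
  have hne : Nonempty κ.ord.ToType := by
    rw [Ordinal.nonempty_toType_iff]
    simp only [ne_eq, Cardinal.ord_eq_zero]
    exact hκ.pos.ne'
  constructor
  · intro a b x f g
    obtain ⟨χ⟩ := huniv a
    obtain ⟨χb, hχb⟩ := hhom f χ
    obtain ⟨χc, hχc⟩ := hhom g χ
    obtain ⟨j₁, φ₁, hφ₁⟩ := factor_through_s2 κ i (hsmall b) hc χb
    obtain ⟨j₂, φ₂, hφ₂⟩ := factor_through_s2 κ i (hsmall x) hc χc
    set j := max j₁ j₂ with hj
    set φ₁' : i.obj b ⟶ i.obj (U.obj j) :=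
      φ₁ ≫ i.map (U.map (homOfLE (le_max_left j₁ j₂))) with hφ₁'
    set φ₂' : i.obj x ⟶ i.obj (U.obj j) :=
      φ₂ ≫ i.map (U.map (homOfLE (le_max_right j₁ j₂))) with hφ₂'
    have e1 : φ₁' ≫ c.ι.app j = χb := by
      rw [hφ₁', Category.assoc, ← Functor.comp_map, c.w, hφ₁]
    have e2 : φ₂' ≫ c.ι.app j = χc := by
      rw [hφ₂', Category.assoc, ← Functor.comp_map, c.w, hφ₂]
    have key : i.map f ≫ φ₁' = i.map g ≫ φ₂' := by
      refine hmono (const_inDk κ hne i (U.obj j)) ⟨U, c, ⟨hc⟩, rfl⟩ (c.ι.app j)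
        (const_inDk κ hne i a) _ _ ?_
      conv_lhs => rw [Category.assoc, e1]
      conv_rhs => rw [Category.assoc, e2]
      rw [hχb, hχc]
    refine ⟨U.obj j, i.preimage φ₁', i.preimage φ₂', i.map_injective ?_⟩
    rw [Functor.map_comp, Functor.map_comp, Functor.map_preimage, Functor.map_preimage]
    exact key
  · intro a b
    obtain ⟨χa⟩ := huniv a
    obtain ⟨χb⟩ := huniv b
    obtain ⟨j₁, φ₁, hφ₁⟩ := factor_through_s2 κ i (hsmall a) hc χa
    obtain ⟨j₂, φ₂, hφ₂⟩ := factor_through_s2 κ i (hsmall b) hc χb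
    refine ⟨U.obj (max j₁ j₂),
      ⟨i.preimage (φ₁ ≫ i.map (U.map (homOfLE (le_max_left j₁ j₂))))⟩,
      ⟨i.preimage (φ₂ ≫ i.map (U.map (homOfLE (le_max_right j₁ j₂))))⟩⟩

end Fraisse
end

section
/- Let κ be an infinite regular cardinal, i : C → D a fully faithful embedding such that every object of C is κ-small in D and all morphisms of D_κ are monomorphisms, and let u be a colimit in D of a κ-chain ū with values in the image of C. If u is C-homogeneous and C-universal, then ū has the extension property; in particular ū is a Fraïssé sequence in C. -/
open CategoryTheory CategoryTheory.Limits Opposite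

universe w v₁ u₁ v₂ u₂

namespace Fraisse

variable {C : Type u₁} [Category.{v₁} C] {D : Type u₂} [Category.{v₂} D]

/-- Every object in the image of `i` belongs to `D_κ`, via the constant chain. -/
lemma inDk_obj_aux {C : Type u₁} [Category.{v₁} C] {D : Type u₂} [Category.{v₂} D]
    (κ : Cardinal.{w}) (hne : Nonempty κ.ord.ToType) (i : C ⥤ D) (a : C) :
    InDk κ i (i.obj a) := by
  obtain ⟨j₀⟩ := hne
  refine ⟨(Functor.const _).obj a,
    { pt := i.obj a
      ι := { app := fun _ => 𝟙 _, naturality := fun j l g => by simp } }, ⟨?_⟩, rfl⟩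
  have key : ∀ (s : Cocone ((Functor.const κ.ord.ToType).obj a ⋙ i))
      (j l : κ.ord.ToType), s.ι.app j = s.ι.app l := by
    have aux : ∀ (s : Cocone ((Functor.const κ.ord.ToType).obj a ⋙ i))
        (j l : κ.ord.ToType), j ≤ l → s.ι.app j = s.ι.app l := by
      intro s j l h
      have := s.w (homOfLE h)
      simpa using this.symm
    intro s j l
    rcases le_total j l with h | h
    · exact aux s j l h
    · exact (aux s l j h).symm
  exact
    { desc := fun s => s.ι.app j₀
      fac := fun s j => by simpa using key s j₀ j
      uniq := fun s m hm => by simpa using hm j₀ }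

/-- Let `κ` be an infinite regular cardinal, `i : C ⥤ D` a fully faithful
embedding such that every object of `C` is `κ`-small in `D` and all morphisms of `D_κ` are
monomorphisms, and let `u` be a colimit in `D` of a `κ`-chain `U` with values in the image
of `C`.  If `u` is `C`-homogeneous and `C`-universal then `U` has the extension property;
in particular `U` is a Fraïssé sequence in `C`. -/
theorem statement_3 {C : Type u₁} [Category.{v₁} C] {D : Type u₂} [Category.{v₂} D]
    (κ : Cardinal.{w}) (hκ : κ.IsRegular)
    (i : C ⥤ D) (hfull : i.Full) (hfaith : i.Faithful)
    (hsmall : ∀ a : C, KappaSmall κ i a)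
    (hmono : AllMonoOn (InDk κ i))
    (U : κ.ord.ToType ⥤ C) (c : Cocone (U ⋙ i)) (hc : IsColimit c)
    (hhomog : IsHomog i c.pt) (huniv : IsUniv i c.pt) :
    HasExtProp U ∧ IsFraisseSeq U := by
  haveI := hfull
  haveI := hfaith
  have hne : Nonempty κ.ord.ToType := by
    rw [Ordinal.toType_nonempty_iff_ne_zero, ne_eq, Cardinal.ord_eq_zero]
    exact hκ.pos.ne'
  have hPobj : ∀ a : C, InDk κ i (i.obj a) := inDk_obj_aux κ hne i
  have hPpt : InDk κ i c.pt := ⟨U, c, ⟨hc⟩, rfl⟩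
  -- factorization of maps into the colimit through some stage
  have hfac : ∀ (a : C) (χ : i.obj a ⟶ c.pt),
      ∃ (l : κ.ord.ToType) (k : a ⟶ U.obj l), i.map k ≫ c.ι.app l = χ := by
    intro a χ
    haveI : PreservesColimitsOfShape κ.ord.ToType (coyoneda.obj (op (i.obj a))) := hsmall a
    have hcol : IsColimit ((coyoneda.obj (op (i.obj a))).mapCocone c) :=
      isColimitOfPreserves _ hc
    obtain ⟨l, ψ, hψ⟩ := Types.jointly_surjective _ hcol χ
    obtain ⟨k, hk⟩ := i.map_surjective ψ
    exact ⟨l, k, by rw [hk]; exact hψ⟩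
  have ext : HasExtProp U := by
    intro a b f j g
    obtain ⟨χ', hχ'⟩ := hhomog f (i.map g ≫ c.ι.app j)
    obtain ⟨l, k, hk⟩ := hfac b χ'
    set m := max j l with hm
    have hj : j ≤ m := le_max_left _ _
    have hl : l ≤ m := le_max_right _ _
    refine ⟨m, hj, k ≫ U.map (homOfLE hl), ?_⟩
    apply i.map_injective
    refine hmono (hPobj (U.obj m)) hPpt (c.ι.app m) (hPobj a) _ _ ?_
    have w1 : (U ⋙ i).map (homOfLE hj) ≫ c.ι.app m = c.ι.app j := c.w (homOfLE hj)
    have w2 : (U ⋙ i).map (homOfLE hl) ≫ c.ι.app m = c.ι.app l := c.w (homOfLE hl)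
    calc i.map (g ≫ U.map (homOfLE hj)) ≫ c.ι.app m
        = i.map g ≫ ((U ⋙ i).map (homOfLE hj) ≫ c.ι.app m) := by
          simp [Functor.comp_map]
      _ = i.map g ≫ c.ι.app j := by rw [w1]
      _ = i.map f ≫ χ' := hχ'.symm
      _ = i.map f ≫ i.map k ≫ c.ι.app l := by rw [hk]
      _ = i.map (f ≫ (k ≫ U.map (homOfLE hl))) ≫ c.ι.app m := by
          rw [← w2]; simp [Functor.comp_map]
  refine ⟨ext, ?_, ?_⟩
  · intro a
    obtain ⟨χ⟩ := huniv a
    obtain ⟨l, k, _⟩ := hfac a χ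
    exact ⟨l, ⟨k⟩⟩
  · intro j x f
    obtain ⟨l, h, k, hk⟩ := ext f j (𝟙 (U.obj j))
    exact ⟨l, h, k, by simpa using hk⟩

end Fraisse
end

section
/- Let κ be an infinite regular cardinal, C a category satisfying the amalgamation property, and i : C → D a fully faithful embedding such that every object of C is κ-small in D. If ū is a κ-Fraïssé sequence in C and u is a colimit in D of (the image under i of) ū, then u is C-homogeneous and C-universal. -/
open CategoryTheory CategoryTheory.Limits Opposite

universe w v₁ u₁ v₂ u₂

namespace Fraisse

variable {C : Type u₁} [Category.{v₁} C] {D : Type u₂} [Category.{v₂} D]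

/-- Let `κ` be an infinite regular cardinal, `C` a category satisfying
the amalgamation property, and `i : C ⥤ D` a fully faithful embedding such that every
object of `C` is `κ`-small in `D`.  If `U` is a `κ`-Fraïssé sequence in `C` and `u` is a
colimit in `D` of the image of `U` under `i`, then `u` is `C`-homogeneous and
`C`-universal. -/
theorem statement_4 {C : Type u₁} [Category.{v₁} C] {D : Type u₂} [Category.{v₂} D]
    (κ : Cardinal.{w}) (hκ : κ.IsRegular) (hAP : AP C)
    (i : C ⥤ D) (hfull : i.Full) (hfaith : i.Faithful)
    (hsmall : ∀ a : C, KappaSmall κ i a)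
    (U : κ.ord.ToType ⥤ C) (hU : IsFraisseSeq U)
    (c : Cocone (U ⋙ i)) (hc : IsColimit c) :
    IsHomog i c.pt ∧ IsUniv i c.pt := by
  haveI := hfull
  constructor
  · intro a b j χ
    haveI : PreservesColimitsOfShape κ.ord.ToType (coyoneda.obj (op (i.obj a))) := hsmall a
    have hcol := isColimitOfPreserves (coyoneda.obj (op (i.obj a))) hc
    obtain ⟨m, f, hf⟩ := Types.jointly_surjective _ hcol χ
    obtain ⟨d, f'', g'', hcomm⟩ := hAP j (i.preimage f)
    obtain ⟨l, hl, g, hg⟩ := hU.2 m d g''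
    refine ⟨i.map (f'' ≫ g) ≫ c.ι.app l, ?_⟩
    have key : j ≫ f'' ≫ g = i.preimage f ≫ U.map (homOfLE hl) := by
      rw [hg, ← Category.assoc, hcomm, Category.assoc]
    calc i.map j ≫ i.map (f'' ≫ g) ≫ c.ι.app l
        = i.map (j ≫ f'' ≫ g) ≫ c.ι.app l := by simp only [Functor.map_comp, Category.assoc]
      _ = i.map (i.preimage f) ≫ (U ⋙ i).map (homOfLE hl) ≫ c.ι.app l := by
          rw [key, i.map_comp, Category.assoc]; rfl
      _ = f ≫ c.ι.app m := by rw [c.w (homOfLE hl), i.map_preimage]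
      _ = χ := hf
  · intro a
    obtain ⟨j, ⟨g⟩⟩ := hU.1 a
    exact ⟨i.map g ≫ c.ι.app j⟩

end Fraisse
end

section
/- Let κ be an infinite regular cardinal, C a category satisfying the amalgamation property, and i : C → D a fully faithful embedding such that every object of C is κ-small in D. If ū is a continuous κ-Fraïssé sequence in C and u is a colimit in D of (the image under i of) ū, then u is C-ultrahomogeneous. -/
open CategoryTheory CategoryTheory.Limits Opposite Cardinal

universe w v₁ u₁ v₂ u₂

namespace Fraisse

variable {C : Type u₁} [Category.{v₁} C] {D : Type u₂} [Category.{v₂} D]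

section Aux

variable {α : Type w} [LinearOrder α]

lemma aux_hasExtProp (hAP : AP C) {U : α ⥤ C} (hU : IsFraisseSeq U) : HasExtProp U := by
  intro a b f j g
  obtain ⟨d, f', g', hfg⟩ := hAP f g
  obtain ⟨l, h, k, hk⟩ := hU.2 j d g'
  refine ⟨l, h, f' ≫ k, ?_⟩
  rw [hk, ← Category.assoc, ← hfg, Category.assoc]

structure Stage (U : α ⥤ C) : Type (max u₁ v₁ w) where
  p : α
  q : α
  r : α
  hpq : p ≤ q
  hqr : q < r
  F : U.obj p ⟶ U.obj q
  G : U.obj q ⟶ U.obj r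
  hFG : F ≫ G = U.map (homOfLE (hpq.trans hqr.le))

def Coh (U : α ⥤ C) (x y : Stage U) : Prop :=
  ∃ h : x.r ≤ y.p,
    x.G ≫ U.map (homOfLE h) ≫ y.F =
      U.map (homOfLE (x.hqr.le.trans (h.trans y.hpq)))

lemma Coh.ple {U : α ⥤ C} {x y : Stage U} (h : Coh U x y) : x.p ≤ y.p :=
  (x.hpq.trans x.hqr.le).trans h.choose

lemma Coh.qle {U : α ⥤ C} {x y : Stage U} (h : Coh U x y) : x.q ≤ y.q :=
  x.hqr.le.trans (h.choose.trans y.hpq)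

lemma aux_UU (U : α ⥤ C) {x y z : α} (h1 : x ≤ y) (h2 : y ≤ z) (h3 : x ≤ z) :
    U.map (homOfLE h1) ≫ U.map (homOfLE h2) = U.map (homOfLE h3) := by
  rw [← U.map_comp, homOfLE_comp]

lemma aux_Urefl (U : α ⥤ C) {x : α} (h : x ≤ x) : U.map (homOfLE h) = 𝟙 _ := by
  rw [show homOfLE h = 𝟙 x from rfl, U.map_id]

lemma Coh.natF {U : α ⥤ C} {x y : Stage U} (h : Coh U x y)
    (h1 : x.p ≤ y.p) (h2 : x.q ≤ y.q) :
    U.map (homOfLE h1) ≫ y.F = x.F ≫ U.map (homOfLE h2) := by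
  obtain ⟨h0, e⟩ := h
  have : U.map (homOfLE h1) = U.map (homOfLE (x.hpq.trans x.hqr.le)) ≫ U.map (homOfLE h0) :=
    (aux_UU U _ _ _).symm
  rw [this, ← x.hFG, Category.assoc, Category.assoc, e]

lemma Coh.natG {U : α ⥤ C} {x y : Stage U} (h : Coh U x y)
    (h1 : x.r ≤ y.r) (h2 : x.q ≤ y.q) :
    x.G ≫ U.map (homOfLE h1) = U.map (homOfLE h2) ≫ y.G := by
  obtain ⟨h0, e⟩ := h
  have : U.map (homOfLE h1) = U.map (homOfLE h0) ≫ U.map (homOfLE (y.hpq.trans y.hqr.le)) :=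
    (aux_UU U _ _ _).symm
  rw [this, ← y.hFG, ← Category.assoc, ← Category.assoc]
  congr 1
  rw [Category.assoc, e]

lemma aux_exists_G {U : α ⥤ C} (hExt : HasExtProp U) (hnm : ∀ x : α, ∃ y, x < y)
    {p q : α} (hpq : p ≤ q) (F : U.obj p ⟶ U.obj q) :
    ∃ (r : α) (hqr : q < r) (G : U.obj q ⟶ U.obj r),
      F ≫ G = U.map (homOfLE (hpq.trans hqr.le)) := by
  obtain ⟨l, hl, k, hk⟩ := hExt F p (𝟙 _)
  rw [Category.id_comp] at hk
  obtain ⟨r, hr⟩ := hnm (max l q)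
  refine ⟨r, (le_max_right l q).trans_lt hr, k ≫ U.map (homOfLE ((le_max_left l q).trans hr.le)),
    ?_⟩
  rw [← Category.assoc, ← hk, aux_UU]

end Aux

lemma exists_zigzag (κ : Cardinal.{w}) (hκ : κ.IsRegular) (hAP : AP C)
    (U : κ.ord.ToType ⥤ C) (hU : IsFraisseSeq U) (hcont : ContinuousChain U)
    {a b : C} (j : a ⟶ b) (M : κ.ord.ToType) (f₁ : a ⟶ U.obj M) (g₁ : b ⟶ U.obj M) :
    ∃ st : κ.ord.ToType → Stage U,
      (∀ s t, s < t → Coh U (st s) (st t)) ∧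
      (∀ t, t ≤ (st t).p) ∧
      ∃ h : M ≤ (st M).p,
        f₁ ≫ U.map (homOfLE h) ≫ (st M).F =
          j ≫ g₁ ≫ U.map (homOfLE (h.trans (st M).hpq)) := by
  classical
  let A := κ.ord.ToType
  haveI : IsWellOrder A (·<·) := isWellOrder_lt
  have hwf : WellFounded ((·<·) : A → A → Prop) := wellFounded_lt
  have hbdd : ∀ S : Set A, #S < κ → ∃ b, ∀ x ∈ S, x < b := fun S hS =>
    by
      by_contra hcon
      have hcof : IsCofinal S := by
        by_contra h; exact hcon (not_isCofinal_iff.1 h)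
      have hle := Order.cof_le hcof
      rw [Ordinal.cof_toType, hκ.cof_ord] at hle
      exact absurd hS (not_lt.2 hle)
  have hnm : ∀ x : A, ∃ y, x < y := by
    intro x
    obtain ⟨b, hb⟩ := hbdd {x} (by
      rw [mk_singleton]; exact one_lt_aleph0.trans_le hκ.aleph0_le)
    exact ⟨b, hb x rfl⟩
  have hExt : HasExtProp U := aux_hasExtProp hAP hU
  have hne : Nonempty A := Ordinal.toType_nonempty_iff_ne_zero.2 hκ.ord_pos.ne'
  have hstage : Nonempty (Stage U) := by
    obtain ⟨x⟩ := hne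
    obtain ⟨r, hqr, G, hFG⟩ := aux_exists_G hExt hnm (le_refl x) (𝟙 (U.obj x))
    exact ⟨⟨x, x, r, le_rfl, hqr, 𝟙 _, G, hFG⟩⟩
  -- base condition
  let Base : Stage U → Prop := fun x => ∃ h : M ≤ x.p,
    f₁ ≫ U.map (homOfLE h) ≫ x.F = j ≫ g₁ ≫ U.map (homOfLE (h.trans x.hpq))
  -- the one-step construction
  have step : ∀ (t : A) (prev : ∀ s, s < t → Stage U),
      (∀ s hs s' hs', s < s' → Coh U (prev s hs) (prev s' hs')) →
      ∃ x : Stage U, (∀ s hs, Coh U (prev s hs) x) ∧ ((∀ s, ¬ s < t) → Base x) := by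
    intro t prev hcoh
    by_cases hne2 : ∃ s, s < t
    · by_cases hmax : ∃ s₀, ∃ _ : s₀ < t, ∀ s, s < t → s ≤ s₀
      · -- successor case
        obtain ⟨s₀, hs₀t, hs₀max⟩ := hmax
        obtain ⟨l, hl, k, hk⟩ := hExt (prev s₀ hs₀t).G (prev s₀ hs₀t).q (𝟙 _)
        rw [Category.id_comp] at hk
        have hGF1 : (prev s₀ hs₀t).G ≫ (k ≫ U.map (homOfLE (le_max_left l (prev s₀ hs₀t).r))) =
            U.map (homOfLE (hl.trans (le_max_left l (prev s₀ hs₀t).r))) := by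
          rw [← Category.assoc, ← hk, aux_UU]
        obtain ⟨r1, hqr1, G1, hFG1⟩ := aux_exists_G hExt hnm
          (le_max_right l (prev s₀ hs₀t).r)
          (k ≫ U.map (homOfLE (le_max_left l (prev s₀ hs₀t).r)))
        refine ⟨⟨(prev s₀ hs₀t).r, max l (prev s₀ hs₀t).r, r1, le_max_right l (prev s₀ hs₀t).r,
          hqr1, k ≫ U.map (homOfLE (le_max_left l (prev s₀ hs₀t).r)), G1, hFG1⟩, ?_,
          fun h => absurd hs₀t (h s₀)⟩
        intro s hs
        rcases eq_or_lt_of_le (hs₀max s hs) with rfl | hlt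
        · refine ⟨le_rfl, ?_⟩
          rw [aux_Urefl U, Category.id_comp]
          exact hGF1
        · obtain ⟨h0, e0⟩ := hcoh s hs s₀ hs₀t hlt
          refine ⟨h0.trans ((prev s₀ hs₀t).hpq.trans (prev s₀ hs₀t).hqr.le), ?_⟩
          have e1 : U.map (homOfLE (h0.trans ((prev s₀ hs₀t).hpq.trans (prev s₀ hs₀t).hqr.le))) =
              U.map (homOfLE h0) ≫ ((prev s₀ hs₀t).F ≫ (prev s₀ hs₀t).G) := by
            rw [(prev s₀ hs₀t).hFG, aux_UU]
          rw [e1]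
          simp only [Category.assoc]
          rw [reassoc_of% e0, hGF1, aux_UU]
      · -- limit case
        push_neg at hmax
        obtain ⟨s₀, hs₀⟩ := hne2
        have hnomax : ∀ s, s < t → ∃ s', s < s' ∧ s' < t := by
          intro s hs
          obtain ⟨s', hs't, hss'⟩ := hmax s hs
          exact ⟨s', hss', hs't⟩
        set S : Set A := {x : A | ∃ s : A, ∃ hs : s < t, (prev s hs).p = x} with hS
        have hSsmall : #S < κ := by
          calc #S ≤ #(Set.range fun s : Set.Iio t => (prev s.1 s.2).p) := by
                refine mk_le_mk_of_subset ?_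
                rintro x ⟨s, hs, he⟩
                exact ⟨⟨s, hs⟩, he⟩
            _ ≤ #(Set.Iio t) := mk_range_le
            _ < κ := Cardinal.mk_Iio_ord_toType t
        obtain ⟨B, hB⟩ := hbdd S hSsmall
        have hUBne : {b2 : A | ∀ x ∈ S, x ≤ b2}.Nonempty := ⟨B, fun x hx => (hB x hx).le⟩
        set L := hwf.min {b2 : A | ∀ x ∈ S, x ≤ b2} hUBne with hL
        have hub : ∀ x ∈ S, x ≤ L := hwf.min_mem _ hUBne
        have hlub : ∀ m, m < L → ∃ x ∈ S, m < x := by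
          intro m hm
          by_contra hcon
          push_neg at hcon
          exact hwf.not_lt_min {b2 : A | ∀ x ∈ S, x ≤ b2}
            (fun x hx => hcon x hx) hm
        have hrle : ∀ s (hs : s < t), (prev s hs).r ≤ L := by
          intro s hs
          obtain ⟨s', hss', hs't⟩ := hnomax s hs
          exact (hcoh s hs s' hs't hss').choose.trans (hub _ ⟨s', hs't, rfl⟩)
        have hplt : ∀ s (hs : s < t), (prev s hs).p < L := fun s hs =>
          lt_of_lt_of_le ((prev s hs).hpq.trans_lt (prev s hs).hqr) (hrle s hs)
        have hqlt : ∀ s (hs : s < t), (prev s hs).q < L := fun s hs =>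
          lt_of_lt_of_le (prev s hs).hqr (hrle s hs)
        have hlim : IsLimitElem L := by
          constructor
          · exact ⟨(prev s₀ hs₀).p, hplt s₀ hs₀⟩
          · intro m hm
            obtain ⟨x, hxS, hmx⟩ := hlub m hm
            obtain ⟨s, hs, rfl⟩ := hxS
            exact ⟨(prev s hs).p, hmx, hplt s hs⟩
        obtain ⟨colim⟩ := hcont L hlim
        have kcompat : ∀ (m : A) (s s' : A) (hs : s < t) (hs' : s' < t)
            (h1 : m ≤ (prev s hs).p) (h2 : m ≤ (prev s' hs').p),
            U.map (homOfLE h1) ≫ (prev s hs).F ≫ U.map (homOfLE (hqlt s hs).le) =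
            U.map (homOfLE h2) ≫ (prev s' hs').F ≫ U.map (homOfLE (hqlt s' hs').le) := by
          have key : ∀ (s s' : A) (hs : s < t) (hs' : s' < t), s ≤ s' → ∀ (m : A)
              (h1 : m ≤ (prev s hs).p) (h2 : m ≤ (prev s' hs').p),
              U.map (homOfLE h1) ≫ (prev s hs).F ≫ U.map (homOfLE (hqlt s hs).le) =
              U.map (homOfLE h2) ≫ (prev s' hs').F ≫ U.map (homOfLE (hqlt s' hs').le) := by
            intro s s' hs hs' hss' m h1 h2
            rcases eq_or_lt_of_le hss' with rfl | hlt
            · rfl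
            · have hc := hcoh s hs s' hs' hlt
              rw [show U.map (homOfLE h2) =
                  U.map (homOfLE h1) ≫ U.map (homOfLE hc.ple) from (aux_UU U _ _ _).symm]
              rw [Category.assoc, ← Category.assoc (U.map (homOfLE hc.ple)),
                hc.natF hc.ple hc.qle, Category.assoc, aux_UU]
          intro m s s' hs hs' h1 h2
          rcases le_total s s' with h | h
          · exact key s s' hs hs' h m h1 h2
          · exact (key s' s hs' hs h m h2 h1).symm
        have hsel : ∀ m : {m : A // m < L}, ∃ s : A, ∃ hs : s < t, m.1 < (prev s hs).p := by
          intro m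
          obtain ⟨x, hxS, hmx⟩ := hlub m.1 m.2
          obtain ⟨s, hs, rfl⟩ := hxS
          exact ⟨s, hs, hmx⟩
        choose sel hsel1 hsel2 using hsel
        set K : Cocone (segIncl L ⋙ U) :=
          ⟨U.obj L,
            { app := fun m => U.map (homOfLE (hsel2 m).le) ≫ (prev (sel m) (hsel1 m)).F ≫
                U.map (homOfLE (hqlt (sel m) (hsel1 m)).le)
              naturality := by
                intro m m' g
                simp only [Functor.const_obj_map, Category.comp_id, Functor.comp_map]
                have hm : m.1 ≤ m'.1 := leOfHom g
                rw [show (segIncl L).map g = homOfLE hm from Subsingleton.elim _ _]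
                rw [← Category.assoc]
                erw [aux_UU U hm (hsel2 m').le (hm.trans (hsel2 m').le)]
                exact (kcompat m.1 (sel m') (sel m) (hsel1 m') (hsel1 m)
                  (hm.trans (hsel2 m').le) (hsel2 m).le).trans (Category.comp_id _).symm }⟩
          with hK
        have hfac : ∀ m : {m : A // m < L},
            U.map (homOfLE m.2.le) ≫ colim.desc K = K.ι.app m := fun m => colim.fac K m
        obtain ⟨r1, hqr1, G1, hFG1⟩ := aux_exists_G hExt hnm (le_refl L) (colim.desc K)
        refine ⟨⟨L, L, r1, le_rfl, hqr1, colim.desc K, G1, hFG1⟩, ?_,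
          fun h => absurd hs₀ (h s₀)⟩
        intro s hs
        refine ⟨hrle s hs, ?_⟩
        obtain ⟨s', hss', hs't⟩ := hnomax s hs
        obtain ⟨h0, e0⟩ := hcoh s hs s' hs't hss'
        have hps' : (prev s' hs't).p < L := hplt s' hs't
        have e1 : U.map (homOfLE hps'.le) ≫ colim.desc K =
            K.ι.app ⟨(prev s' hs't).p, hps'⟩ := hfac ⟨(prev s' hs't).p, hps'⟩
        have e2 : K.ι.app ⟨(prev s' hs't).p, hps'⟩ =
            U.map (homOfLE (le_refl (prev s' hs't).p)) ≫ (prev s' hs't).F ≫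
              U.map (homOfLE (hqlt s' hs't).le) :=
          kcompat (prev s' hs't).p (sel ⟨(prev s' hs't).p, hps'⟩) s' (hsel1 _) hs't
            (hsel2 ⟨(prev s' hs't).p, hps'⟩).le le_rfl
        rw [show U.map (homOfLE (hrle s hs)) =
            U.map (homOfLE h0) ≫ U.map (homOfLE hps'.le) from (aux_UU U _ _ _).symm]
        dsimp only
        have e1' : (U.map (homOfLE h0) ≫ U.map (homOfLE hps'.le)) ≫ colim.desc K =
            U.map (homOfLE h0) ≫ K.ι.app ⟨(prev s' hs't).p, hps'⟩ :=
          (Category.assoc _ _ _).trans (congrArg (U.map (homOfLE h0) ≫ ·) e1)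
        refine (congrArg ((prev s hs).G ≫ ·) e1').trans ?_
        rw [e2, aux_Urefl U, Category.id_comp, reassoc_of% e0, aux_UU]
    · -- bottom case
      obtain ⟨d, r₀, s₀, hrs⟩ := hAP f₁ (j ≫ g₁)
      obtain ⟨l, hMl, hdl, hh⟩ := hU.2 M d s₀
      obtain ⟨r1, hqr1, G1, hFG1⟩ := aux_exists_G hExt hnm hMl (r₀ ≫ hdl)
      refine ⟨⟨M, l, r1, hMl, hqr1, r₀ ≫ hdl, G1, hFG1⟩,
        fun s hs => absurd ⟨s, hs⟩ hne2, fun _ => ⟨le_rfl, ?_⟩⟩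
      rw [aux_Urefl U, Category.id_comp, ← Category.assoc, hrs, Category.assoc,
        Category.assoc, ← hh]
  -- the recursion
  let next : ∀ t : A, (∀ s, s < t → Stage U) → Stage U := fun t prev =>
    if h : (∀ s hs s' hs', s < s' → Coh U (prev s hs) (prev s' hs')) then
      (step t prev h).choose else hstage.some
  let st : A → Stage U := hwf.fix next
  have hst : ∀ t, st t = next t (fun s _ => st s) := fun t => hwf.fix_eq next t
  have hok : ∀ t : A, (∀ s (hs : s < t), Coh U (st s) (st t)) ∧
      ((∀ s, ¬ s < t) → Base (st t)) := by
    intro t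
    induction t using hwf.induction with
    | _ t ih =>
      have hcoh : ∀ s (hs : s < t) s' (hs' : s' < t), s < s' →
          Coh U ((fun s (_ : s < t) => st s) s hs) ((fun s (_ : s < t) => st s) s' hs') :=
        fun s hs s' hs' hss' => (ih s' hs').1 s hss'
      have he : st t = (step t (fun s _ => st s) hcoh).choose := by
        rw [hst t]; exact dif_pos hcoh
      rw [he]
      exact (step t (fun s _ => st s) hcoh).choose_spec
  have hcohall : ∀ s t : A, s < t → Coh U (st s) (st t) := fun s t h => (hok t).1 s h
  have hle : ∀ t : A, t ≤ (st t).p := by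
    intro t
    induction t using hwf.induction with
    | _ t ih =>
      by_contra hcon
      push_neg at hcon
      have h1 := ih _ hcon
      have h0 := (hcohall _ _ hcon).choose
      exact absurd (lt_of_le_of_lt (h1.trans ((st (st t).p).hpq))
        (lt_of_lt_of_le (st (st t).p).hqr h0)) (lt_irrefl _)
  -- the base stage
  obtain ⟨x₀⟩ := hne
  let bot : A := hwf.min Set.univ ⟨x₀, Set.mem_univ x₀⟩
  have hbot : ∀ s : A, ¬ s < bot := fun s hs =>
    hwf.not_lt_min Set.univ (Set.mem_univ s) hs
  obtain ⟨hMb, heqb⟩ := (hok bot).2 hbot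
  refine ⟨st, hcohall, hle, hle M, ?_⟩
  rcases eq_or_lt_of_le (le_of_not_gt (hbot M)) with he | hlt
  · -- bot = M
    subst he
    exact heqb
  · -- bot < M
    have hc := hcohall bot M hlt
    have e1 : U.map (homOfLE (hle M)) =
        U.map (homOfLE hMb) ≫ U.map (homOfLE hc.ple) := (aux_UU U _ _ _).symm
    rw [e1, Category.assoc, hc.natF hc.ple hc.qle, ← Category.assoc, ← Category.assoc]
    rw [← Category.assoc] at heqb
    rw [heqb, Category.assoc, Category.assoc, aux_UU]


lemma aux_rep {α : Type w} [LinearOrder α] (i : C ⥤ D) [i.Full] (U : α ⥤ C)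
    (c : Cocone (U ⋙ i)) (hc : IsColimit c) (a : C)
    [PreservesColimitsOfShape α (coyoneda.obj (op (i.obj a)))]
    (χ : i.obj a ⟶ c.pt) :
    ∃ (m : α) (f : a ⟶ U.obj m), i.map f ≫ c.ι.app m = χ := by
  have hc' : IsColimit ((coyoneda.obj (op (i.obj a))).mapCocone c) :=
    isColimitOfPreserves _ hc
  let S : Set (i.obj a ⟶ c.pt) :=
    {x | ∃ (m : α) (f : a ⟶ U.obj m), i.map f ≫ c.ι.app m = x}
  let T : Cocone ((U ⋙ i) ⋙ coyoneda.obj (op (i.obj a))) :=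
    ⟨S,
      { app := fun m => TypeCat.ofHom fun y =>
          ⟨y ≫ c.ι.app m, m, i.preimage y, by rw [Functor.map_preimage]⟩
        naturality := fun m m' g => by
          ext y
          apply Subtype.ext
          show (y ≫ (U ⋙ i).map g) ≫ c.ι.app m' = y ≫ c.ι.app m
          rw [Category.assoc, c.w g] }⟩
  have key : ∀ x : i.obj a ⟶ c.pt, (hc'.desc T x).1 = x := by
    have he : hc'.desc T ≫ TypeCat.ofHom (fun x : S => x.1) = 𝟙 _ := by
      apply hc'.hom_ext
      intro m
      rw [← Category.assoc, hc'.fac]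
      ext y
      rfl
    intro x
    exact congrArg (fun f => f x) he
  obtain ⟨m, f, hf⟩ := (hc'.desc T χ).2
  exact ⟨m, f, hf.trans (key χ)⟩


/-- Let `κ` be an infinite regular cardinal, `C` a category satisfying
the amalgamation property, and `i : C ⥤ D` a fully faithful embedding such that every
object of `C` is `κ`-small in `D`.  If `U` is a continuous `κ`-Fraïssé sequence in `C` and
`u` is a colimit in `D` of the image of `U` under `i`, then `u` is `C`-ultrahomogeneous. -/
theorem statement_5 {C : Type u₁} [Category.{v₁} C] {D : Type u₂} [Category.{v₂} D]
    (κ : Cardinal.{w}) (hκ : κ.IsRegular) (hAP : AP C)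
    (i : C ⥤ D) (hfull : i.Full) (hfaith : i.Faithful)
    (hsmall : ∀ a : C, KappaSmall κ i a)
    (U : κ.ord.ToType ⥤ C) (hU : IsFraisseSeq U) (hcont : ContinuousChain U)
    (c : Cocone (U ⋙ i)) (hc : IsColimit c) :
    IsUltrahomog i c.pt := by
  haveI : i.Full := hfull
  haveI : i.Faithful := hfaith
  intro a b j χ₁ χ₂
  haveI : PreservesColimitsOfShape κ.ord.ToType (coyoneda.obj (op (i.obj a))) := hsmall a
  haveI : PreservesColimitsOfShape κ.ord.ToType (coyoneda.obj (op (i.obj b))) := hsmall b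
  obtain ⟨m₀, f₀, hf₀⟩ := aux_rep i U c hc a χ₁
  obtain ⟨n₀, g₀, hg₀⟩ := aux_rep i U c hc b χ₂
  have hf₁ : i.map (f₀ ≫ U.map (homOfLE (le_max_left m₀ n₀))) ≫ c.ι.app (max m₀ n₀) = χ₁ := by
    rw [i.map_comp, Category.assoc,
      show i.map (U.map (homOfLE (le_max_left m₀ n₀))) ≫ c.ι.app (max m₀ n₀) = c.ι.app m₀
        from c.w (homOfLE (le_max_left m₀ n₀))]
    exact hf₀
  have hg₁ : i.map (g₀ ≫ U.map (homOfLE (le_max_right m₀ n₀))) ≫ c.ι.app (max m₀ n₀) = χ₂ := by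
    rw [i.map_comp, Category.assoc,
      show i.map (U.map (homOfLE (le_max_right m₀ n₀))) ≫ c.ι.app (max m₀ n₀) = c.ι.app n₀
        from c.w (homOfLE (le_max_right m₀ n₀))]
    exact hg₀
  obtain ⟨st, hcoh, hle, hM, hMeq⟩ := exists_zigzag κ hκ hAP U hU hcont j (max m₀ n₀)
    (f₀ ≫ U.map (homOfLE (le_max_left m₀ n₀))) (g₀ ≫ U.map (homOfLE (le_max_right m₀ n₀)))
  have hpp : ∀ {s t : κ.ord.ToType}, s ≤ t → (st s).p ≤ (st t).p := by
    intro s t h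
    rcases eq_or_lt_of_le h with rfl | h
    · exact le_rfl
    · exact (hcoh _ _ h).ple
  have hqq : ∀ {s t : κ.ord.ToType}, s ≤ t → (st s).q ≤ (st t).q := by
    intro s t h
    rcases eq_or_lt_of_le h with rfl | h
    · exact le_rfl
    · exact (hcoh _ _ h).qle
  have hrr : ∀ {s t : κ.ord.ToType}, s ≤ t → (st s).r ≤ (st t).r := by
    intro s t h
    rcases eq_or_lt_of_le h with rfl | h
    · exact le_rfl
    · exact (hcoh _ _ h).choose.trans ((st t).hpq.trans (st t).hqr.le)
  have natF : ∀ {s t : κ.ord.ToType} (_ : s ≤ t) (h1 : (st s).p ≤ (st t).p)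
      (h2 : (st s).q ≤ (st t).q),
      U.map (homOfLE h1) ≫ (st t).F = (st s).F ≫ U.map (homOfLE h2) := by
    intro s t h h1 h2
    rcases eq_or_lt_of_le h with rfl | h
    · rw [aux_Urefl, aux_Urefl, Category.id_comp, Category.comp_id]
    · exact (hcoh _ _ h).natF h1 h2
  have natG : ∀ {s t : κ.ord.ToType} (_ : s ≤ t) (h1 : (st s).r ≤ (st t).r)
      (h2 : (st s).q ≤ (st t).q),
      (st s).G ≫ U.map (homOfLE h1) = U.map (homOfLE h2) ≫ (st t).G := by
    intro s t h h1 h2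
    rcases eq_or_lt_of_le h with rfl | h
    · rw [aux_Urefl, aux_Urefl, Category.id_comp, Category.comp_id]
    · exact (hcoh _ _ h).natG h1 h2
  let K1 : Cocone (U ⋙ i) :=
    ⟨c.pt,
      { app := fun m => i.map (U.map (homOfLE (hle m)) ≫ (st m).F) ≫ c.ι.app (st m).q
        naturality := fun m m' g => by
          have hm : m ≤ m' := leOfHom g
          have e : U.map g ≫ U.map (homOfLE (hle m')) ≫ (st m').F =
              (U.map (homOfLE (hle m)) ≫ (st m).F) ≫ U.map (homOfLE (hqq hm)) := by
            rw [show (g : m ⟶ m') = homOfLE hm from Subsingleton.elim _ _,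
              ← Category.assoc, aux_UU U hm (hle m') (hm.trans (hle m')),
              show U.map (homOfLE (hm.trans (hle m'))) =
                U.map (homOfLE (hle m)) ≫ U.map (homOfLE (hpp hm)) from (aux_UU U _ _ _).symm,
              Category.assoc, natF hm (hpp hm) (hqq hm)]
            simp only [Category.assoc]
          simp only [Functor.const_obj_map, Functor.comp_map, Category.comp_id]
          rw [← Functor.map_comp_assoc, e, i.map_comp, Category.assoc,
            show i.map (U.map (homOfLE (hqq hm))) ≫ c.ι.app (st m').q = c.ι.app (st m).q
              from c.w (homOfLE (hqq hm))]
          exact (Category.comp_id _).symm }⟩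
  let K2 : Cocone (U ⋙ i) :=
    ⟨c.pt,
      { app := fun m => i.map (U.map (homOfLE ((hle m).trans (st m).hpq)) ≫ (st m).G) ≫
          c.ι.app (st m).r
        naturality := fun m m' g => by
          have hm : m ≤ m' := leOfHom g
          have e : U.map g ≫ U.map (homOfLE ((hle m').trans (st m').hpq)) ≫ (st m').G =
              (U.map (homOfLE ((hle m).trans (st m).hpq)) ≫ (st m).G) ≫
                U.map (homOfLE (hrr hm)) := by
            rw [show (g : m ⟶ m') = homOfLE hm from Subsingleton.elim _ _,
              ← Category.assoc,
              aux_UU U hm ((hle m').trans (st m').hpq) (hm.trans ((hle m').trans (st m').hpq)),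
              show U.map (homOfLE (hm.trans ((hle m').trans (st m').hpq))) =
                U.map (homOfLE ((hle m).trans (st m).hpq)) ≫ U.map (homOfLE (hqq hm))
                from (aux_UU U _ _ _).symm,
              Category.assoc, ← natG hm (hrr hm) (hqq hm)]
            simp only [Category.assoc]
          simp only [Functor.const_obj_map, Functor.comp_map, Category.comp_id]
          rw [← Functor.map_comp_assoc, e, i.map_comp, Category.assoc,
            show i.map (U.map (homOfLE (hrr hm))) ≫ c.ι.app (st m').r = c.ι.app (st m).r
              from c.w (homOfLE (hrr hm))]
          exact (Category.comp_id _).symm }⟩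
  let k := hc.desc K1
  let k' := hc.desc K2
  have hk : ∀ m, c.ι.app m ≫ k =
      i.map (U.map (homOfLE (hle m)) ≫ (st m).F) ≫ c.ι.app (st m).q := fun m => hc.fac K1 m
  have hk' : ∀ m, c.ι.app m ≫ k' =
      i.map (U.map (homOfLE ((hle m).trans (st m).hpq)) ≫ (st m).G) ≫ c.ι.app (st m).r :=
    fun m => hc.fac K2 m
  have hkk' : k ≫ k' = 𝟙 c.pt := by
    apply hc.hom_ext
    intro m
    simp only [Category.comp_id]
    rw [← Category.assoc, hk m, Category.assoc, hk' (st m).q,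
      ← Category.assoc, ← i.map_comp]
    have hmq : m ≤ (st m).q := (hle m).trans (st m).hpq
    have eC : (U.map (homOfLE (hle m)) ≫ (st m).F) ≫
        (U.map (homOfLE ((hle (st m).q).trans (st (st m).q).hpq)) ≫ (st (st m).q).G) =
        U.map (homOfLE (((hle m).trans ((st m).hpq.trans (st m).hqr.le)).trans (hrr hmq))) := by
      rw [← natG hmq (hrr hmq) ((hle (st m).q).trans (st (st m).q).hpq)]
      simp only [Category.assoc]
      rw [reassoc_of% (st m).hFG,
        aux_UU U ((st m).hpq.trans (st m).hqr.le) (hrr hmq)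
          (((st m).hpq.trans (st m).hqr.le).trans (hrr hmq)),
        aux_UU]
    rw [eC, show i.map (U.map (homOfLE
        (((hle m).trans ((st m).hpq.trans (st m).hqr.le)).trans (hrr hmq)))) ≫
        c.ι.app (st (st m).q).r = c.ι.app m from
      c.w (homOfLE (((hle m).trans ((st m).hpq.trans (st m).hqr.le)).trans (hrr hmq)))]
  have hk'k : k' ≫ k = 𝟙 c.pt := by
    apply hc.hom_ext
    intro m
    simp only [Category.comp_id]
    rw [← Category.assoc, hk' m, Category.assoc, hk (st m).r,
      ← Category.assoc, ← i.map_comp]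
    have hmr : m < (st m).r := lt_of_le_of_lt ((hle m).trans (st m).hpq) (st m).hqr
    obtain ⟨h0, e0⟩ := hcoh m (st m).r hmr
    have eC : (U.map (homOfLE ((hle m).trans (st m).hpq)) ≫ (st m).G) ≫
        (U.map (homOfLE (hle (st m).r)) ≫ (st (st m).r).F) =
        U.map (homOfLE (((hle m).trans (st m).hpq).trans
          ((st m).hqr.le.trans (h0.trans (st (st m).r).hpq)))) := by
      simp only [Category.assoc]
      rw [show U.map (homOfLE (hle (st m).r)) = U.map (homOfLE h0) from rfl, e0, aux_UU]
    rw [eC, show i.map (U.map (homOfLE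
        (((hle m).trans (st m).hpq).trans
          ((st m).hqr.le.trans (h0.trans (st (st m).r).hpq))))) ≫
        c.ι.app (st (st m).r).q = c.ι.app m from
      c.w (homOfLE (((hle m).trans (st m).hpq).trans
        ((st m).hqr.le.trans (h0.trans (st (st m).r).hpq))))]
  refine ⟨⟨k, k', hkk', hk'k⟩, ?_⟩
  show χ₁ ≫ k = i.map j ≫ χ₂
  rw [← hf₁, ← hg₁, Category.assoc, hk (max m₀ n₀), ← Category.assoc, ← i.map_comp]
  rw [hMeq]
  rw [i.map_comp, i.map_comp, Category.assoc, Category.assoc,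
    show i.map (U.map (homOfLE (hM.trans (st (max m₀ n₀)).hpq))) ≫ c.ι.app (st (max m₀ n₀)).q =
      c.ι.app (max m₀ n₀) from c.w (homOfLE (hM.trans (st (max m₀ n₀)).hpq))]


end Fraisse
end

section
/- Let κ be an infinite regular cardinal and i : C → D a fully faithful embedding. Let ū and v̄ be continuous κ-Fraïssé sequences in C, with colimits u and v in D (with colimit cocone morphisms j_m : i(u_m) → u and j'_m : i(v_m) → v), and let f : u_k → v_l be a morphism of C between an element of ū and an element of v̄. Then there exists an isomorphism F : u → v in D such that F ∘ j_k = j'_l ∘ i(f). -/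
open CategoryTheory CategoryTheory.Limits Opposite

universe w v₁ u₁ v₂ u₂

namespace Fraisse

variable {C : Type u₁} [Category.{v₁} C] {D : Type u₂} [Category.{v₂} D]

section BackForth

variable {C : Type u₁} [Category.{v₁} C] {κ : Cardinal.{w}}

/-- A stage of the back-and-forth construction. -/
structure BF (U V : κ.ord.ToType ⥤ C) : Type max w v₁ where
  t : κ.ord.ToType
  e : κ.ord.ToType
  x : κ.ord.ToType
  ff : U.obj t ⟶ V.obj e
  gg : V.obj e ⟶ U.obj x

/-- `α` is the successor of `β`. -/
def SuccPair {α' : Type w} [LinearOrder α'] (β α : α') : Prop :=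
  β < α ∧ ∀ γ, γ < α → γ ≤ β

variable {U V : κ.ord.ToType ⥤ C}

/-- Composition of maps of a chain. -/
theorem mapLE_comp (W : κ.ord.ToType ⥤ C) {a b c : κ.ord.ToType}
    (h : a ≤ b) (h' : b ≤ c) (h'' : a ≤ c) :
    W.map (homOfLE h) ≫ W.map (homOfLE h') = W.map (homOfLE h'') := by
  rw [← W.map_comp, homOfLE_comp]

theorem mapLE_refl (W : κ.ord.ToType ⥤ C) {a : κ.ord.ToType} (h : a ≤ a) :
    W.map (homOfLE h) = 𝟙 _ := by
  rw [show homOfLE h = 𝟙 a from Subsingleton.elim _ _, W.map_id]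

/-- The link between two stages: the forward maps commute. -/
def BF.Link (s s' : BF U V) : Prop :=
  s.t < s'.t ∧ s.e < s'.e ∧
    ∀ (h1 : s.t ≤ s'.t) (h2 : s.e ≤ s'.e),
      s.ff ≫ V.map (homOfLE h2) = U.map (homOfLE h1) ≫ s'.ff

/-- A stage is internally coherent. -/
def BF.Ok (s : BF U V) : Prop :=
  s.t < s.x ∧ ∀ h : s.t ≤ s.x, s.ff ≫ s.gg = U.map (homOfLE h)

/-- Zigzag relation between a stage and its successor stage. -/
def BF.Zig (s s' : BF U V) : Prop :=
  s.x ≤ s'.t ∧ s.e ≤ s'.e ∧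
    ∀ (h1 : s.x ≤ s'.t) (h2 : s.e ≤ s'.e),
      s.gg ≫ U.map (homOfLE h1) ≫ s'.ff = V.map (homOfLE h2)

/-- The bottom stage extends the seed morphism `f0`. -/
def BF.Seed (k l : κ.ord.ToType) (f0 : U.obj k ⟶ V.obj l) (s : BF U V) : Prop :=
  k ≤ s.t ∧ l ≤ s.e ∧ ∀ (h1 : k ≤ s.t) (h2 : l ≤ s.e),
    U.map (homOfLE h1) ≫ s.ff = f0 ≫ V.map (homOfLE h2)

theorem BF.Link.trans {s1 s2 s3 : BF U V} (h12 : s1.Link s2) (h23 : s2.Link s3) :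
    s1.Link s3 := by
  obtain ⟨a12, b12, c12⟩ := h12
  obtain ⟨a23, b23, c23⟩ := h23
  refine ⟨a12.trans a23, b12.trans b23, fun h1 h2 => ?_⟩
  rw [← mapLE_comp V b12.le b23.le h2, ← mapLE_comp U a12.le a23.le h1,
    ← Category.assoc, c12 a12.le b12.le, Category.assoc, c23 a23.le b23.le,
    ← Category.assoc]

/-- Goodness of the previous stages. -/
def PrevGood (k l : κ.ord.ToType) (f0 : U.obj k ⟶ V.obj l) (α : κ.ord.ToType)
    (prev : ∀ β, β < α → BF U V) : Prop :=
  (∀ β hβ γ hγ, β < γ → (prev β hβ).Link (prev γ hγ)) ∧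
  (∀ β hβ, (prev β hβ).Ok) ∧
  (∀ β hβ γ hγ, SuccPair β γ → (prev β hβ).Zig (prev γ hγ)) ∧
  (∀ β hβ, (∀ γ, β ≤ γ) → (prev β hβ).Seed k l f0)

/-- Goodness of a new stage with respect to the previous stages. -/
def NewOk (k l : κ.ord.ToType) (f0 : U.obj k ⟶ V.obj l) (α : κ.ord.ToType)
    (prev : ∀ β, β < α → BF U V) (s : BF U V) : Prop :=
  (∀ β hβ, (prev β hβ).Link s) ∧ s.Ok ∧
  (∀ β hβ, SuccPair β α → (prev β hβ).Zig s) ∧ ((∀ γ, α ≤ γ) → s.Seed k l f0)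

theorem bdd_aux (hκ : κ.IsRegular) (α : κ.ord.ToType)
    (G : {β : κ.ord.ToType // β < α} → κ.ord.ToType) : ∃ b, ∀ β, G β ≤ b := by
  haveI : IsWellOrder κ.ord.ToType (· < ·) := isWellOrder_lt
  by_contra hb
  push_neg at hb
  have hunb : Set.Unbounded (· < ·) (Set.range G) := by
    intro a
    obtain ⟨β, hβ⟩ := hb a
    exact ⟨G β, Set.mem_range_self β, not_lt.2 hβ.le⟩
  have h1 : Ordinal.cof (Ordinal.type ((· < ·) : κ.ord.ToType → _ → Prop)) ≤ Cardinal.mk (Set.range G) :=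
    Ordinal.cof_type_le (fun a => let ⟨β, hβ⟩ := hb a; ⟨G β, Set.mem_range_self β, hβ.le⟩)
  rw [Ordinal.type_toType, hκ.cof_eq] at h1
  have h2 : Cardinal.mk (Set.range G) ≤ Cardinal.mk {β : κ.ord.ToType // β < α} := Cardinal.mk_range_le
  have h3 : Cardinal.mk {β : κ.ord.ToType // β < α} < κ := by
    have h4 := Ordinal.typein_lt_type ((· < ·) : κ.ord.ToType → _ → Prop) α
    rw [Ordinal.type_toType] at h4
    have h5 := Cardinal.lt_ord.1 h4
    exact h5
  exact absurd (h1.trans h2) (not_le.2 h3)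

theorem exists_g (hκ : κ.IsRegular) (hU : IsFraisseSeq U) (t e : κ.ord.ToType)
    (ff : U.obj t ⟶ V.obj e) :
    ∃ (x : κ.ord.ToType) (_ : t < x) (gg : V.obj e ⟶ U.obj x),
      ∀ h : t ≤ x, ff ≫ gg = U.map (homOfLE h) := by
  haveI := Cardinal.noMaxOrder hκ.aleph0_le
  obtain ⟨x₀, hx₀, g₀, hg₀⟩ := hU.2 t (V.obj e) ff
  obtain ⟨x₁, hx₁⟩ := exists_gt x₀
  refine ⟨x₁, lt_of_le_of_lt hx₀ hx₁, g₀ ≫ U.map (homOfLE hx₁.le), fun h => ?_⟩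
  rw [← Category.assoc, ← hg₀, mapLE_comp]

theorem exists_next (hκ : κ.IsRegular) (hU : IsFraisseSeq U) (hV : IsFraisseSeq V)
    (hUcont : ContinuousChain U) (k l : κ.ord.ToType) (f0 : U.obj k ⟶ V.obj l)
    (α : κ.ord.ToType) (prev : ∀ β, β < α → BF U V)
    (hgood : PrevGood k l f0 α prev) :
    ∃ s : BF U V, NewOk k l f0 α prev s := by
  haveI := Cardinal.noMaxOrder hκ.aleph0_le
  obtain ⟨hlink, hok, hzig, hseed⟩ := hgood
  by_cases hne : ∃ β, β < α
  · by_cases hsucc : ∃ β₀, SuccPair β₀ α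
    · -- successor case
      obtain ⟨β₀, hsp⟩ := hsucc
      have hβ₀ : β₀ < α := hsp.1
      obtain ⟨e₀, he₀, g', hg'⟩ := hV.2 (prev β₀ hβ₀).e (U.obj (prev β₀ hβ₀).x) (prev β₀ hβ₀).gg
      obtain ⟨e₁, he₁⟩ := exists_gt e₀
      obtain ⟨x, hx, gg, hgg⟩ :=
        exists_g hκ hU (prev β₀ hβ₀).x e₁ (g' ≫ V.map (homOfLE he₁.le))
      have hlink0 : (prev β₀ hβ₀).Link ⟨(prev β₀ hβ₀).x, e₁, x, g' ≫ V.map (homOfLE he₁.le), gg⟩ := by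
        refine ⟨(hok β₀ hβ₀).1, lt_of_le_of_lt he₀ he₁, fun h1 h2 => ?_⟩
        dsimp only
        calc (prev β₀ hβ₀).ff ≫ V.map (homOfLE h2)
            = (prev β₀ hβ₀).ff ≫ V.map (homOfLE he₀) ≫ V.map (homOfLE he₁.le) := by
              rw [mapLE_comp V he₀ he₁.le h2]
          _ = (prev β₀ hβ₀).ff ≫ ((prev β₀ hβ₀).gg ≫ g') ≫ V.map (homOfLE he₁.le) := by
              rw [← hg']
          _ = ((prev β₀ hβ₀).ff ≫ (prev β₀ hβ₀).gg) ≫ g' ≫ V.map (homOfLE he₁.le) := by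
              simp only [Category.assoc]
          _ = U.map (homOfLE h1) ≫ g' ≫ V.map (homOfLE he₁.le) := by
              rw [(hok β₀ hβ₀).2 h1]
      refine ⟨⟨(prev β₀ hβ₀).x, e₁, x, g' ≫ V.map (homOfLE he₁.le), gg⟩,
        ?_, ⟨hx, hgg⟩, ?_, ?_⟩
      · intro β hβ
        rcases eq_or_lt_of_le (hsp.2 β hβ) with h | h
        · subst h
          exact hlink0
        · exact (hlink β hβ β₀ hβ₀ h).trans hlink0
      · intro β hβ hsp'
        have hββ₀ : β = β₀ := le_antisymm (hsp.2 β hβ) (hsp'.2 β₀ hβ₀)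
        subst hββ₀
        refine ⟨le_rfl, he₀.trans he₁.le, fun h1 h2 => ?_⟩
        dsimp only
        rw [mapLE_refl U h1, Category.id_comp, ← Category.assoc, ← hg',
          mapLE_comp V he₀ he₁.le h2]
      · intro hbot
        exact absurd (hbot β₀) (not_le.2 hβ₀)
    · -- limit case
      have hlim : ∀ β, β < α → ∃ γ, β < γ ∧ γ < α := by
        intro β hβ
        by_contra hcon
        push_neg at hcon
        exact hsucc ⟨β, hβ, fun γ hγ => not_lt.1 fun hβγ => absurd hγ (not_lt.2 (hcon γ hβγ))⟩
      have wf : WellFounded ((· < ·) : κ.ord.ToType → κ.ord.ToType → Prop) :=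
        IsWellFounded.wf
      obtain ⟨bθ, hbθ⟩ := bdd_aux hκ α (fun p => (prev p.1 p.2).t)
      obtain ⟨bθ', hbθ'⟩ := exists_gt bθ
      have hSne : {xx : κ.ord.ToType | ∀ p : {β // β < α}, (prev p.1 p.2).t < xx}.Nonempty :=
        ⟨bθ', fun p => lt_of_le_of_lt (hbθ p) hbθ'⟩
      set T := wf.min _ hSne with hT
      have hT1 : ∀ p : {β // β < α}, (prev p.1 p.2).t < T := wf.min_mem _ hSne
      have hT2 : ∀ xx, xx < T → ∃ p : {β // β < α}, xx ≤ (prev p.1 p.2).t := by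
        intro xx hxx
        by_contra hcon
        push_neg at hcon
        exact wf.not_lt_min {xx : κ.ord.ToType | ∀ p : {β // β < α}, (prev p.1 p.2).t < xx} (x := xx) (fun p => hcon p) hxx
      have hTlim : IsLimitElem T := by
        obtain ⟨β₀, hβ₀⟩ := hne
        refine ⟨⟨(prev β₀ hβ₀).t, hT1 ⟨β₀, hβ₀⟩⟩, fun m hm => ?_⟩
        obtain ⟨p, hp⟩ := hT2 m hm
        obtain ⟨γ, hγ1, hγ2⟩ := hlim p.1 p.2
        exact ⟨(prev γ hγ2).t, lt_of_le_of_lt hp (hlink p.1 p.2 γ hγ2 hγ1).1,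
          hT1 ⟨γ, hγ2⟩⟩
      obtain ⟨be, hbe⟩ := bdd_aux hκ α (fun p => (prev p.1 p.2).e)
      obtain ⟨E, hE⟩ := exists_gt be
      have hEp : ∀ p : {β // β < α}, (prev p.1 p.2).e ≤ E :=
        fun p => ((hbe p).trans_lt hE).le
      have tmono : ∀ (p q : {β // β < α}), p.1 ≤ q.1 → (prev p.1 p.2).t ≤ (prev q.1 q.2).t := by
        intro p q hpq
        rcases eq_or_lt_of_le hpq with h | h
        · have hq : p = q := Subtype.ext h
          subst hq; exact le_rfl
        · exact (hlink p.1 p.2 q.1 q.2 h).1.le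
      have emono : ∀ (p q : {β // β < α}), p.1 ≤ q.1 → (prev p.1 p.2).e ≤ (prev q.1 q.2).e := by
        intro p q hpq
        rcases eq_or_lt_of_le hpq with h | h
        · have hq : p = q := Subtype.ext h
          subst hq; exact le_rfl
        · exact (hlink p.1 p.2 q.1 q.2 h).2.1.le
      have wlink : ∀ (p q : {β // β < α}), p.1 ≤ q.1 →
          ∀ (h1 : (prev p.1 p.2).t ≤ (prev q.1 q.2).t) (h2 : (prev p.1 p.2).e ≤ (prev q.1 q.2).e),
          (prev p.1 p.2).ff ≫ V.map (homOfLE h2) = U.map (homOfLE h1) ≫ (prev q.1 q.2).ff := by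
        intro p q hpq h1 h2
        rcases eq_or_lt_of_le hpq with h | h
        · have hq : p = q := Subtype.ext h
          subst hq
          rw [mapLE_refl U h1, mapLE_refl V h2, Category.id_comp, Category.comp_id]
        · exact (hlink p.1 p.2 q.1 q.2 h).2.2 h1 h2
      have indep : ∀ (m : κ.ord.ToType) (p q : {β // β < α})
          (h1 : m ≤ (prev p.1 p.2).t) (h2 : m ≤ (prev q.1 q.2).t),
          U.map (homOfLE h1) ≫ (prev p.1 p.2).ff ≫ V.map (homOfLE (hEp p)) =
          U.map (homOfLE h2) ≫ (prev q.1 q.2).ff ≫ V.map (homOfLE (hEp q)) := by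
        have key : ∀ (m : κ.ord.ToType) (p q : {β // β < α}), p.1 ≤ q.1 →
            ∀ (h1 : m ≤ (prev p.1 p.2).t) (h2 : m ≤ (prev q.1 q.2).t),
            U.map (homOfLE h1) ≫ (prev p.1 p.2).ff ≫ V.map (homOfLE (hEp p)) =
            U.map (homOfLE h2) ≫ (prev q.1 q.2).ff ≫ V.map (homOfLE (hEp q)) := by
          intro m p q hpq h1 h2
          calc U.map (homOfLE h1) ≫ (prev p.1 p.2).ff ≫ V.map (homOfLE (hEp p))
              = U.map (homOfLE h1) ≫ (prev p.1 p.2).ff ≫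
                  V.map (homOfLE (emono p q hpq)) ≫ V.map (homOfLE (hEp q)) := by
                rw [mapLE_comp V (emono p q hpq) (hEp q) (hEp p)]
            _ = U.map (homOfLE h1) ≫ (U.map (homOfLE (tmono p q hpq)) ≫ (prev q.1 q.2).ff) ≫
                  V.map (homOfLE (hEp q)) := by
                rw [← Category.assoc ((prev p.1 p.2).ff),
                  wlink p q hpq (tmono p q hpq) (emono p q hpq), Category.assoc]
            _ = U.map (homOfLE h2) ≫ (prev q.1 q.2).ff ≫ V.map (homOfLE (hEp q)) := by
                rw [← Category.assoc, ← Category.assoc,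
                  mapLE_comp U h1 (tmono p q hpq) h2, Category.assoc]
        intro m p q h1 h2
        rcases le_total p.1 q.1 with h | h
        · exact key m p q h h1 h2
        · exact (key m q p h h2 h1).symm
      have hchoose : ∀ m : {m : κ.ord.ToType // m < T}, ∃ p : {β // β < α},
          m.1 ≤ (prev p.1 p.2).t := fun m => hT2 m.1 m.2
      have hpm : ∀ m : {m : κ.ord.ToType // m < T},
          m.1 ≤ (prev (hchoose m).choose.1 (hchoose m).choose.2).t :=
        fun m => (hchoose m).choose_spec
      set cc : Cocone (segIncl T ⋙ U) :=
        { pt := V.obj E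
          ι :=
            { app := fun m => U.map (homOfLE (hpm m)) ≫
                (prev (hchoose m).choose.1 (hchoose m).choose.2).ff ≫
                V.map (homOfLE (hEp (hchoose m).choose))
              naturality := by
                intro m m' g
                have hmm' : m.1 ≤ m'.1 := leOfHom g
                have hg : (segIncl T).map g = homOfLE hmm' := Subsingleton.elim _ _
                simp only [Functor.comp_map, Functor.const_obj_map, Category.comp_id,
                  Category.assoc, hg]
                erw [← Category.assoc,
                  mapLE_comp U hmm' (hpm m') (hmm'.trans (hpm m')),
                  indep m.1 (hchoose m').choose (hchoose m).choose
                    (hmm'.trans (hpm m')) (hpm m)]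
                simp
                rfl } } with hcc
      obtain ⟨colim⟩ := hUcont T hTlim
      obtain ⟨x, hx, gg, hgg⟩ := exists_g hκ hU T E (colim.desc cc)
      have hcc_app : ∀ m : {m : κ.ord.ToType // m < T}, cc.ι.app m = U.map (homOfLE (hpm m)) ≫
          (prev (hchoose m).choose.1 (hchoose m).choose.2).ff ≫
          V.map (homOfLE (hEp (hchoose m).choose)) := fun m => rfl
      refine ⟨⟨T, E, x, colim.desc cc, gg⟩, ?_, ⟨hx, hgg⟩, ?_, ?_⟩
      · intro β hβ
        refine ⟨hT1 ⟨β, hβ⟩, (hbe ⟨β, hβ⟩).trans_lt hE, fun h1 h2 => ?_⟩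
        dsimp only
        have E1 : U.map (homOfLE h1) ≫ colim.desc cc =
            cc.ι.app ⟨(prev β hβ).t, hT1 ⟨β, hβ⟩⟩ :=
          colim.fac cc ⟨(prev β hβ).t, hT1 ⟨β, hβ⟩⟩
        rw [hcc_app] at E1
        have E2 := indep (prev β hβ).t (hchoose ⟨(prev β hβ).t, hT1 ⟨β, hβ⟩⟩).choose
          ⟨β, hβ⟩ (hpm ⟨(prev β hβ).t, hT1 ⟨β, hβ⟩⟩) le_rfl
        rw [mapLE_refl U le_rfl, Category.id_comp] at E2
        exact ((E1.trans E2)).symm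
      · intro β hβ hsp'
        exfalso
        obtain ⟨γ, hγ1, hγ2⟩ := hlim β hβ
        exact absurd (hsp'.2 γ hγ2) (not_le.2 hγ1)
      · intro hbot
        obtain ⟨β₀, hβ₀⟩ := hne
        exact absurd (hbot β₀) (not_le.2 hβ₀)
  · -- bottom case
    push_neg at hne
    obtain ⟨x, hx, gg, hgg⟩ := exists_g hκ hU k l f0
    refine ⟨⟨k, l, x, f0, gg⟩, fun β hβ => absurd hβ (not_lt.2 (hne β)), ⟨hx, hgg⟩,
      fun β hβ _ => absurd hβ (not_lt.2 (hne β)), fun _ => ⟨le_rfl, le_rfl, fun h1 h2 => ?_⟩⟩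
    dsimp only
    rw [mapLE_refl U h1, mapLE_refl V h2, Category.id_comp, Category.comp_id]

theorem exists_cond (hκ : κ.IsRegular) (hU : IsFraisseSeq U) (hV : IsFraisseSeq V)
    (hUcont : ContinuousChain U) (k l : κ.ord.ToType) (f0 : U.obj k ⟶ V.obj l)
    (α : κ.ord.ToType) (prev : ∀ β, β < α → BF U V) :
    ∃ s : BF U V, PrevGood k l f0 α prev → NewOk k l f0 α prev s := by
  by_cases h : PrevGood k l f0 α prev
  · obtain ⟨s, hs⟩ := exists_next hκ hU hV hUcont k l f0 α prev h
    exact ⟨s, fun _ => hs⟩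
  · obtain ⟨x, hx, gg, hgg⟩ := exists_g hκ hU k l f0
    exact ⟨⟨k, l, x, f0, gg⟩, fun hg => absurd hg h⟩

variable (hκ : κ.IsRegular) (hU : IsFraisseSeq U) (hV : IsFraisseSeq V)
  (hUcont : ContinuousChain U) (k l : κ.ord.ToType) (f0 : U.obj k ⟶ V.obj l)

/-- The transfinite back-and-forth system. -/
noncomputable def sys : κ.ord.ToType → BF U V :=
  (IsWellFounded.wf (r := ((· < ·) : κ.ord.ToType → κ.ord.ToType → Prop))).fix
    (fun α prev => (exists_cond hκ hU hV hUcont k l f0 α prev).choose)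

theorem sys_good : ∀ α : κ.ord.ToType,
    NewOk k l f0 α (fun β _ => sys hκ hU hV hUcont k l f0 β)
      (sys hκ hU hV hUcont k l f0 α) := by
  intro α
  induction α using WellFounded.induction
    (r := ((· < ·) : κ.ord.ToType → κ.ord.ToType → Prop))
    (hwf := IsWellFounded.wf) with
  | _ α IH =>
    have hfix : sys hκ hU hV hUcont k l f0 α =
        (exists_cond hκ hU hV hUcont k l f0 α
          (fun β _ => sys hκ hU hV hUcont k l f0 β)).choose :=
      WellFounded.fix_eq _ _ _
    have hgood : PrevGood k l f0 α (fun β _ => sys hκ hU hV hUcont k l f0 β) := by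
      refine ⟨fun β hβ γ hγ hβγ => (IH γ hγ).1 β hβγ, fun β hβ => (IH β hβ).2.1,
        fun β hβ γ hγ hsp => (IH γ hγ).2.2.1 β hsp.1 hsp,
        fun β hβ hbot => (IH β hβ).2.2.2 hbot⟩
    rw [hfix]
    exact (exists_cond hκ hU hV hUcont k l f0 α
      (fun β _ => sys hκ hU hV hUcont k l f0 β)).choose_spec hgood

theorem exists_family (hκ : κ.IsRegular) (hU : IsFraisseSeq U) (hV : IsFraisseSeq V)
    (hUcont : ContinuousChain U) (k l : κ.ord.ToType) (f0 : U.obj k ⟶ V.obj l) :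
    ∃ S : κ.ord.ToType → BF U V,
      (∀ β α, β < α → (S β).Link (S α)) ∧ (∀ α, (S α).Ok) ∧
      (∀ β α, SuccPair β α → (S β).Zig (S α)) ∧
      (∀ α, (∀ γ, α ≤ γ) → (S α).Seed k l f0) := by
  refine ⟨sys hκ hU hV hUcont k l f0,
    fun β α h => (sys_good hκ hU hV hUcont k l f0 α).1 β h,
    fun α => (sys_good hκ hU hV hUcont k l f0 α).2.1,
    fun β α hsp => (sys_good hκ hU hV hUcont k l f0 α).2.2.1 β hsp.1 hsp,
    fun α hbot => (sys_good hκ hU hV hUcont k l f0 α).2.2.2 hbot⟩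

end BackForth


section Family

variable {C : Type u₁} [Category.{v₁} C] {κ : Cardinal.{w}} {U V : κ.ord.ToType ⥤ C}

theorem exists_succPair (hκ : κ.IsRegular) (a : κ.ord.ToType) : ∃ σ, SuccPair a σ := by
  haveI := Cardinal.noMaxOrder hκ.aleph0_le
  have wf : WellFounded ((· < ·) : κ.ord.ToType → κ.ord.ToType → Prop) := IsWellFounded.wf
  obtain ⟨b, hb⟩ := exists_gt a
  refine ⟨wf.min {x | a < x} ⟨b, hb⟩, wf.min_mem _ _, fun γ hγ => not_lt.1 fun haγ => ?_⟩
  exact absurd hγ (wf.not_lt_min _ haγ)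

variable {S : κ.ord.ToType → BF U V}

theorem fam_tle (hlink : ∀ β α, β < α → (S β).Link (S α)) {β α : κ.ord.ToType}
    (h : β ≤ α) : (S β).t ≤ (S α).t := by
  rcases eq_or_lt_of_le h with h | h
  · subst h; exact le_rfl
  · exact (hlink β α h).1.le

theorem fam_ele (hlink : ∀ β α, β < α → (S β).Link (S α)) {β α : κ.ord.ToType}
    (h : β ≤ α) : (S β).e ≤ (S α).e := by
  rcases eq_or_lt_of_le h with h | h
  · subst h; exact le_rfl
  · exact (hlink β α h).2.1.le

theorem fam_wlink (hlink : ∀ β α, β < α → (S β).Link (S α)) {β α : κ.ord.ToType}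
    (h : β ≤ α) (h1 : (S β).t ≤ (S α).t) (h2 : (S β).e ≤ (S α).e) :
    (S β).ff ≫ V.map (homOfLE h2) = U.map (homOfLE h1) ≫ (S α).ff := by
  rcases eq_or_lt_of_le h with h | h
  · subst h; rw [mapLE_refl U h1, mapLE_refl V h2, Category.id_comp, Category.comp_id]
  · exact (hlink β α h).2.2 h1 h2

theorem fam_xle (hκ : κ.IsRegular) (hlink : ∀ β α, β < α → (S β).Link (S α))
    (hok : ∀ α, (S α).Ok) (hzig : ∀ β α, SuccPair β α → (S β).Zig (S α))
    {β α : κ.ord.ToType} (h : β ≤ α) : (S β).x ≤ (S α).x := by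
  rcases eq_or_lt_of_le h with h | h
  · subst h; exact le_rfl
  · obtain ⟨σ, hσ⟩ := exists_succPair hκ β
    have hσα : σ ≤ α := not_lt.1 fun hc => absurd (hσ.2 α hc) (not_le.2 h)
    exact (hzig β σ hσ).1.trans ((fam_tle hlink hσα).trans (hok α).1.le)

theorem fam_gcompat (hκ : κ.IsRegular) (hlink : ∀ β α, β < α → (S β).Link (S α))
    (hok : ∀ α, (S α).Ok) (hzig : ∀ β α, SuccPair β α → (S β).Zig (S α))
    {β α : κ.ord.ToType} (h : β ≤ α) (h1 : (S β).x ≤ (S α).x) (h2 : (S β).e ≤ (S α).e) :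
    (S β).gg ≫ U.map (homOfLE h1) = V.map (homOfLE h2) ≫ (S α).gg := by
  rcases eq_or_lt_of_le h with h | h
  · subst h; rw [mapLE_refl U h1, mapLE_refl V h2, Category.id_comp, Category.comp_id]
  · obtain ⟨σ, hσ⟩ := exists_succPair hκ β
    have hσα : σ ≤ α := not_lt.1 fun hc => absurd (hσ.2 α hc) (not_le.2 h)
    have zx : (S β).x ≤ (S σ).t := (hzig β σ hσ).1
    have ze : (S β).e ≤ (S σ).e := (hzig β σ hσ).2.1
    have zeq := (hzig β σ hσ).2.2 zx ze
    have htσα : (S σ).t ≤ (S α).t := fam_tle hlink hσα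
    have htxα : (S α).t ≤ (S α).x := (hok α).1.le
    have heσα : (S σ).e ≤ (S α).e := fam_ele hlink hσα
    have h' : (S σ).t ≤ (S α).x := htσα.trans htxα
    have wl := fam_wlink hlink hσα htσα heσα
    rw [← mapLE_comp U zx h' h1, ← mapLE_comp U htσα htxα h', ← (hok α).2 htxα]
    rw [← reassoc_of% wl, reassoc_of% zeq, ← Category.assoc, mapLE_comp V ze heσα h2]

end Family

/-- Let `κ` be an infinite regular cardinal and `i : C ⥤ D` a fully
faithful embedding.  Let `U` and `V` be continuous `κ`-Fraïssé sequences in `C` with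
colimits `u` and `v` in `D` (with colimit cocone morphisms `j_m` and `j'_m`), and let
`f : U.obj k ⟶ V.obj l` be a morphism of `C` between elements of the sequences.  Then
there is an isomorphism `F : u ≅ v` with `F ∘ j_k = j'_l ∘ i(f)`. -/
theorem statement_6 {C : Type u₁} [Category.{v₁} C] {D : Type u₂} [Category.{v₂} D]
    (κ : Cardinal.{w}) (hκ : κ.IsRegular)
    (i : C ⥤ D) (hfull : i.Full) (hfaith : i.Faithful)
    (U V : κ.ord.ToType ⥤ C)
    (hU : IsFraisseSeq U) (hUcont : ContinuousChain U)
    (hV : IsFraisseSeq V) (hVcont : ContinuousChain V)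
    (cu : Cocone (U ⋙ i)) (hcu : IsColimit cu)
    (cv : Cocone (V ⋙ i)) (hcv : IsColimit cv)
    (k l : κ.ord.ToType) (f : U.obj k ⟶ V.obj l) :
    ∃ F : cu.pt ≅ cv.pt, cu.ι.app k ≫ F.hom = i.map f ≫ cv.ι.app l := by
  obtain ⟨S, hlink, hok, hzig, hseed⟩ := exists_family hκ hU hV hUcont k l f
  have tsm : StrictMono (fun α : κ.ord.ToType => (S α).t) := fun a b hab => (hlink a b hab).1
  have esm : StrictMono (fun α : κ.ord.ToType => (S α).e) := fun a b hab => (hlink a b hab).2.1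
  have le_t : ∀ m : κ.ord.ToType, m ≤ (S m).t := fun m => tsm.le_apply
  have le_e : ∀ m : κ.ord.ToType, m ≤ (S m).e := fun m => esm.le_apply
  -- the forward cocone
  have ccF_nat : ∀ {m m' : κ.ord.ToType} (g : m ⟶ m'),
      (U ⋙ i).map g ≫ (i.map (U.map (homOfLE (le_t m')) ≫ (S m').ff) ≫ cv.ι.app (S m').e) =
      i.map (U.map (homOfLE (le_t m)) ≫ (S m).ff) ≫ cv.ι.app (S m).e := by
    intro m m' g
    have hmm' : m ≤ m' := leOfHom g
    have hg : g = homOfLE hmm' := Subsingleton.elim _ _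
    have h1 : (S m).t ≤ (S m').t := fam_tle hlink hmm'
    have h2 : (S m).e ≤ (S m').e := fam_ele hlink hmm'
    have wl := fam_wlink hlink hmm' h1 h2
    have L : U.map (homOfLE hmm') ≫ U.map (homOfLE (le_t m')) ≫ (S m').ff =
        U.map (homOfLE ((le_t m).trans h1)) ≫ (S m').ff := by
      rw [← Category.assoc, mapLE_comp U hmm' (le_t m') ((le_t m).trans h1)]
    have R : (U.map (homOfLE (le_t m)) ≫ (S m).ff) ≫ V.map (homOfLE h2) =
        U.map (homOfLE ((le_t m).trans h1)) ≫ (S m').ff := by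
      rw [Category.assoc, wl, ← Category.assoc, mapLE_comp U (le_t m) h1 ((le_t m).trans h1)]
    have keyC := L.trans R.symm
    have wcv := cv.w (homOfLE h2)
    simp only [Functor.comp_map] at wcv ⊢
    rw [hg, ← wcv]
    simp only [Functor.map_comp, Category.assoc]
    have keyD := congrArg (fun t => i.map t ≫ cv.ι.app (S m').e) keyC
    simp only [Functor.map_comp, Category.assoc] at keyD
    exact keyD
  let ccF : Cocone (U ⋙ i) :=
    { pt := cv.pt
      ι := { app := fun m => i.map (U.map (homOfLE (le_t m)) ≫ (S m).ff) ≫ cv.ι.app (S m).e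
             naturality := fun m m' g => by
               dsimp only [Functor.const_obj_obj, Functor.const_obj_map]
               rw [Category.comp_id]; exact ccF_nat g } }
  -- the backward cocone
  have ccG_nat : ∀ {n n' : κ.ord.ToType} (g : n ⟶ n'),
      (V ⋙ i).map g ≫ (i.map (V.map (homOfLE (le_e n')) ≫ (S n').gg) ≫ cu.ι.app (S n').x) =
      i.map (V.map (homOfLE (le_e n)) ≫ (S n).gg) ≫ cu.ι.app (S n).x := by
    intro n n' g
    have hnn' : n ≤ n' := leOfHom g
    have hg : g = homOfLE hnn' := Subsingleton.elim _ _
    have he : (S n).e ≤ (S n').e := fam_ele hlink hnn'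
    have hx : (S n).x ≤ (S n').x := fam_xle hκ hlink hok hzig hnn'
    have L : V.map (homOfLE hnn') ≫ V.map (homOfLE (le_e n')) ≫ (S n').gg =
        V.map (homOfLE ((le_e n).trans he)) ≫ (S n').gg := by
      rw [← Category.assoc, mapLE_comp V hnn' (le_e n') ((le_e n).trans he)]
    have R : (V.map (homOfLE (le_e n)) ≫ (S n).gg) ≫ U.map (homOfLE hx) =
        V.map (homOfLE ((le_e n).trans he)) ≫ (S n').gg := by
      rw [Category.assoc, fam_gcompat hκ hlink hok hzig hnn' hx he, ← Category.assoc,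
        mapLE_comp V (le_e n) he ((le_e n).trans he)]
    have keyC := L.trans R.symm
    have wcu := cu.w (homOfLE hx)
    simp only [Functor.comp_map] at wcu ⊢
    rw [hg, ← wcu]
    simp only [Functor.map_comp, Category.assoc]
    have keyD := congrArg (fun t => i.map t ≫ cu.ι.app (S n').x) keyC
    simp only [Functor.map_comp, Category.assoc] at keyD
    exact keyD
  let ccG : Cocone (V ⋙ i) :=
    { pt := cu.pt
      ι := { app := fun n => i.map (V.map (homOfLE (le_e n)) ≫ (S n).gg) ≫ cu.ι.app (S n).x
             naturality := fun n n' g => by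
               dsimp only [Functor.const_obj_obj, Functor.const_obj_map]
               rw [Category.comp_id]; exact ccG_nat g } }
  have hFG : hcu.desc ccF ≫ hcv.desc ccG = 𝟙 cu.pt := by
    refine hcu.hom_ext fun m => ?_
    rw [Category.comp_id, ← Category.assoc, hcu.fac ccF m]
    show (i.map (U.map (homOfLE (le_t m)) ≫ (S m).ff) ≫ cv.ι.app (S m).e) ≫ hcv.desc ccG =
      cu.ι.app m
    rw [Category.assoc, hcv.fac ccG ((S m).e)]
    show i.map (U.map (homOfLE (le_t m)) ≫ (S m).ff) ≫
        i.map (V.map (homOfLE (le_e ((S m).e))) ≫ (S ((S m).e)).gg) ≫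
        cu.ι.app (S ((S m).e)).x = cu.ι.app m
    have h1 : (S m).x ≤ (S ((S m).e)).x := fam_xle hκ hlink hok hzig (le_e m)
    have gcomp := fam_gcompat hκ hlink hok hzig (le_e m) h1 (le_e ((S m).e))
    have keym : (U.map (homOfLE (le_t m)) ≫ (S m).ff) ≫
        (V.map (homOfLE (le_e ((S m).e))) ≫ (S ((S m).e)).gg) =
        U.map (homOfLE ((le_t m).trans ((hok m).1.le.trans h1))) := by
      simp only [Category.assoc]
      rw [← gcomp, reassoc_of% ((hok m).2 (hok m).1.le),
        mapLE_comp U (hok m).1.le h1 ((hok m).1.le.trans h1),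
        mapLE_comp U (le_t m) ((hok m).1.le.trans h1) ((le_t m).trans ((hok m).1.le.trans h1))]
    rw [← Category.assoc, ← i.map_comp, keym]
    have wcu := cu.w (homOfLE ((le_t m).trans ((hok m).1.le.trans h1)))
    simp only [Functor.comp_map] at wcu
    exact wcu
  have hGF : hcv.desc ccG ≫ hcu.desc ccF = 𝟙 cv.pt := by
    refine hcv.hom_ext fun n => ?_
    rw [Category.comp_id, ← Category.assoc, hcv.fac ccG n]
    show (i.map (V.map (homOfLE (le_e n)) ≫ (S n).gg) ≫ cu.ι.app (S n).x) ≫ hcu.desc ccF =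
      cv.ι.app n
    rw [Category.assoc, hcu.fac ccF ((S n).x)]
    show i.map (V.map (homOfLE (le_e n)) ≫ (S n).gg) ≫
        i.map (U.map (homOfLE (le_t ((S n).x))) ≫ (S ((S n).x)).ff) ≫
        cv.ι.app (S ((S n).x)).e = cv.ι.app n
    obtain ⟨σ, hσ⟩ := exists_succPair hκ n
    have hnx : n < (S n).x := lt_of_le_of_lt (le_t n) (hok n).1
    have hσx : σ ≤ (S n).x := not_lt.1 fun hc => absurd (hσ.2 _ hc) (not_le.2 hnx)
    have zx : (S n).x ≤ (S σ).t := (hzig n σ hσ).1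
    have ze : (S n).e ≤ (S σ).e := (hzig n σ hσ).2.1
    have zeq := (hzig n σ hσ).2.2 zx ze
    have htσ : (S σ).t ≤ (S ((S n).x)).t := fam_tle hlink hσx
    have heσ : (S σ).e ≤ (S ((S n).x)).e := fam_ele hlink hσx
    have wl2 := fam_wlink hlink hσx htσ heσ
    have keyn : (V.map (homOfLE (le_e n)) ≫ (S n).gg) ≫
        (U.map (homOfLE (le_t ((S n).x))) ≫ (S ((S n).x)).ff) =
        V.map (homOfLE ((le_e n).trans (ze.trans heσ))) := by
      rw [← mapLE_comp U zx htσ (le_t ((S n).x))]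
      simp only [Category.assoc]
      rw [← wl2, reassoc_of% zeq, mapLE_comp V ze heσ (ze.trans heσ),
        mapLE_comp V (le_e n) (ze.trans heσ) ((le_e n).trans (ze.trans heσ))]
    rw [← Category.assoc, ← i.map_comp, keyn]
    have wcv := cv.w (homOfLE ((le_e n).trans (ze.trans heσ)))
    simp only [Functor.comp_map] at wcv
    exact wcv
  refine ⟨⟨hcu.desc ccF, hcv.desc ccG, hFG, hGF⟩, ?_⟩
  show cu.ι.app k ≫ hcu.desc ccF = i.map f ≫ cv.ι.app l
  rw [hcu.fac ccF k]
  show i.map (U.map (homOfLE (le_t k)) ≫ (S k).ff) ≫ cv.ι.app (S k).e =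
    i.map f ≫ cv.ι.app l
  have wf : WellFounded ((· < ·) : κ.ord.ToType → κ.ord.ToType → Prop) := IsWellFounded.wf
  have hbot : ∀ γ, wf.min Set.univ ⟨k, trivial⟩ ≤ γ :=
    fun γ => not_lt.1 fun hc => wf.not_lt_min Set.univ trivial hc
  obtain ⟨hk, hl, hs⟩ := hseed (wf.min Set.univ ⟨k, trivial⟩) hbot
  have hbk : wf.min Set.univ ⟨k, trivial⟩ ≤ k := hbot k
  have htbk : (S (wf.min Set.univ ⟨k, trivial⟩)).t ≤ (S k).t := fam_tle hlink hbk
  have hebk : (S (wf.min Set.univ ⟨k, trivial⟩)).e ≤ (S k).e := fam_ele hlink hbk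
  have wl := fam_wlink hlink hbk htbk hebk
  have keyk : U.map (homOfLE (le_t k)) ≫ (S k).ff =
      f ≫ V.map (homOfLE (hl.trans hebk)) := by
    rw [← mapLE_comp U hk htbk (le_t k), Category.assoc, ← wl, ← Category.assoc, hs hk hl,
      Category.assoc, mapLE_comp V hl hebk (hl.trans hebk)]
  rw [keyk, i.map_comp, Category.assoc]
  have wcv := cv.w (homOfLE (hl.trans hebk))
  simp only [Functor.comp_map] at wcv
  rw [wcv]


end Fraisse
end

section
/- Let C be a small category satisfying the right Ore condition and J_at the atomic topology on C. Then the terminal object of Sh(C, J_at) has exactly two subobjects (the initial subobject and the identity, and these are distinct) — i.e., the atomic topos Sh(C, J_at) is connected — if and only if C is a connected category. -/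
open CategoryTheory CategoryTheory.Limits Opposite

universe u

namespace Fraisse

/-- The right Ore condition: every cospan can be completed to a commutative square. -/
def RightOre (C : Type u) [SmallCategory C] : Prop :=
  ∀ ⦃a b c : C⦄ (f : b ⟶ a) (g : c ⟶ a),
    ∃ (d : C) (f' : d ⟶ c) (g' : d ⟶ b), f' ≫ g = g' ≫ f

/-- The atomic topology on a category satisfying the right Ore condition: a sieve is
covering if and only if it is nonempty. -/
def atomicTopology (C : Type u) [SmallCategory C] (h : RightOre C) :
    GrothendieckTopology C where
  sieves X S := ∃ (Y : C) (f : Y ⟶ X), S.arrows f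
  top_mem' X := ⟨X, 𝟙 X, trivial⟩
  pullback_stable' X Y S f hS := by
    obtain ⟨Z, g, hg⟩ := hS
    obtain ⟨d, f', g', hcomm⟩ := h g f
    exact ⟨d, f', by
      show S.arrows (f' ≫ f)
      rw [hcomm]
      exact S.downward_closed hg g'⟩
  transitive' X S hS R hR := by
    obtain ⟨Z, g, hg⟩ := hS
    obtain ⟨W, k, hk⟩ := hR hg
    exact ⟨W, k ≫ g, hk⟩

section Aux

variable {C : Type u} [SmallCategory C] (h : RightOre C)

/-- A set of objects closed (in both directions) under existence of a morphism. -/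
def ZClosed (S : Set C) : Prop := ∀ ⦃X Y : C⦄, (X ⟶ Y) → (X ∈ S ↔ Y ∈ S)

lemma ZClosed.zigzag {S : Set C} (hS : ZClosed S) {X Y : C} (hz : Zigzag X Y) :
    X ∈ S ↔ Y ∈ S := by
  induction hz with
  | refl => exact Iff.rfl
  | tail _ hzag ih =>
      cases hzag with
      | inl hf => exact ih.trans (hS hf.some)
      | inr hf => exact ih.trans (hS hf.some).symm

instance subsingletonULiftPLift (p : Prop) : Subsingleton (ULift.{u} (PLift p)) :=
  ⟨fun a b => by
    cases a with | up a => cases b with | up b => cases a; cases b; rfl⟩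

/-- The subterminal sheaf associated to a zigzag-closed set of objects. -/
def subSheaf {S : Set C} (hS : ZClosed S) : Sheaf (atomicTopology C h) (Type u) where
  obj :=
    { obj := fun X => ULift.{u} (PLift (X.unop ∈ S))
      map := fun f => TypeCat.ofHom fun x => ⟨⟨(hS f.unop).2 x.down.down⟩⟩
      map_id := fun X => by ext x; exact Subsingleton.elim _ _
      map_comp := fun f g => by ext x; exact Subsingleton.elim _ _ }
  property := by
    rw [isSheaf_iff_isSheaf_of_type]
    intro X R hR x hx
    obtain ⟨Y, g, hg⟩ := hR
    exact ⟨⟨⟨(hS g).1 (x g hg).down.down⟩⟩,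
      fun Z f hf => Subsingleton.elim _ _,
      fun t ht => Subsingleton.elim _ _⟩

instance subSheaf_obj_subsingleton {S : Set C} (hS : ZClosed S) (X : Cᵒᵖ) :
    Subsingleton ((subSheaf h hS).val.obj X) :=
  subsingletonULiftPLift _

/-- Any morphism out of a pointwise-empty sheaf. -/
def homOfEmpty {F G : Sheaf (atomicTopology C h) (Type u)}
    (hF : ∀ X : Cᵒᵖ, IsEmpty (F.val.obj X)) : F ⟶ G :=
  ⟨{ app := fun X => TypeCat.ofHom fun x => ((hF X).false x).elim
     naturality := fun X _Y _f => by ext x; exact ((hF X).false x).elim }⟩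

lemma mono_of_subsingleton {F G : Sheaf (atomicTopology C h) (Type u)} (f : F ⟶ G)
    (hF : ∀ X, Subsingleton (F.val.obj X)) : Mono f := by
  have hval : Mono f.hom := by
    rw [NatTrans.mono_iff_mono_app]
    intro X
    rw [mono_iff_injective]
    intro a b _
    exact @Subsingleton.elim _ (hF X) a b
  exact Sheaf.Hom.mono_of_presheaf_mono _ _ f

/-- The subterminal sheaf on the whole of `C`. -/
abbrev unitSheaf : Sheaf (atomicTopology C h) (Type u) :=
  subSheaf h (S := Set.univ) (fun _ _ _ => by simp)

/-- The subterminal sheaf on the empty set of objects. -/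
abbrev emptySheaf : Sheaf (atomicTopology C h) (Type u) :=
  subSheaf h (S := ∅) (fun _ _ _ => Iff.rfl)

/-- `unitSheaf` is terminal. -/
def unitIsTerminal : IsTerminal (unitSheaf h) :=
  IsTerminal.ofUniqueHom
    (fun F =>
      ⟨{ app := fun X => TypeCat.ofHom fun _ => ⟨⟨Set.mem_univ _⟩⟩
         naturality := fun X Y f => by ext x; exact @Subsingleton.elim _ (subsingletonULiftPLift _) _ _ }⟩)
    (fun F m => by
      apply Sheaf.hom_ext
      ext X x
      exact @Subsingleton.elim _ (subsingletonULiftPLift _) _ _)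

lemma terminal_subsingleton (X : Cᵒᵖ) :
    Subsingleton ((⊤_ (Sheaf (atomicTopology C h) (Type u))).val.obj X) := by
  constructor
  intro a b
  let i := (sheafToPresheaf (atomicTopology C h) (Type u)).mapIso
    (terminalIsTerminal.uniqueUpToIso (unitIsTerminal h))
  have ha := Iso.hom_inv_id_apply (i.app X) a
  have hb := Iso.hom_inv_id_apply (i.app X) b
  calc a = (i.app X).inv ((i.app X).hom a) := ha.symm
    _ = (i.app X).inv ((i.app X).hom b) := by
        exact congrArg (i.app X).inv (@Subsingleton.elim _ (subsingletonULiftPLift _) _ _)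
    _ = b := hb

lemma terminal_nonempty (X : Cᵒᵖ) :
    Nonempty ((⊤_ (Sheaf (atomicTopology C h) (Type u))).val.obj X) :=
  ⟨(terminal.from (unitSheaf h)).hom.app X ⟨⟨Set.mem_univ _⟩⟩⟩

/-- Upward closure: if `F` is a subterminal sheaf with a section over `Y` and there is a map
`Y ⟶ X`, then `F` has a section over `X`, by the sheaf condition for the atomic topology. -/
lemma mem_of_hom {F : Sheaf (atomicTopology C h) (Type u)}
    (hsub : ∀ X, Subsingleton (F.val.obj X)) {Y X : C} (g : Y ⟶ X)
    (hY : Nonempty (F.val.obj (op Y))) : Nonempty (F.val.obj (op X)) := by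
  have hsheaf := (isSheaf_iff_isSheaf_of_type _ _).1 F.cond
  set R : Sieve X := Sieve.generate (Presieve.singleton g) with hRdef
  have hR : R ∈ (atomicTopology C h) X :=
    ⟨Y, g, ⟨Y, 𝟙 Y, g, Presieve.singleton.mk, Category.id_comp g⟩⟩
  have hne : ∀ ⦃Z : C⦄ (f : Z ⟶ X), R.arrows f → Nonempty (F.val.obj (op Z)) := by
    intro Z f hf
    obtain ⟨W, k, l, hl, -⟩ := hf
    cases hl
    exact ⟨F.val.map k.op (Classical.choice hY)⟩
  haveI := hsub
  have fam : Presieve.FamilyOfElements F.val R.arrows :=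
    fun Z f hf => Classical.choice (hne f hf)
  have hcomp : fam.Compatible := by
    intro Y₁ Y₂ Z g₁ g₂ f₁ f₂ h₁ h₂ _
    exact Subsingleton.elim _ _
  obtain ⟨t, -, -⟩ := hsheaf R hR fam hcomp
  exact ⟨t⟩

end Aux

attribute [local instance high] Sheaf.instHasColimitsOfShape

/-- Let `C` be a small category satisfying the right Ore condition and
`J_at` the atomic topology on `C`.  Then the terminal object of `Sh(C, J_at)` has exactly
two subobjects (the initial one and the identity, which are distinct) — i.e. the atomic
topos `Sh(C, J_at)` is connected — if and only if `C` is a connected category. -/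
theorem statement_15 {C : Type u} [SmallCategory C] (h : RightOre C) :
    ((∀ s : Subobject (⊤_ (Sheaf (atomicTopology C h) (Type u))), s = ⊥ ∨ s = ⊤) ∧
      (⊥ : Subobject (⊤_ (Sheaf (atomicTopology C h) (Type u)))) ≠ ⊤) ↔
    IsConnected C := by
  constructor
  · rintro ⟨hsub, hbot⟩
    have hNE : Nonempty C := by
      by_contra hempty
      apply hbot
      rw [Subobject.bot_eq_initial_to]
      have h1 : IsIso (initial.to (⊤_ (Sheaf (atomicTopology C h) (Type u)))).hom := by
        haveI : ∀ X : Cᵒᵖ,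
            IsIso ((initial.to (⊤_ (Sheaf (atomicTopology C h) (Type u)))).hom.app X) :=
          fun X => (hempty ⟨X.unop⟩).elim
        exact NatIso.isIso_of_isIso_app _
      haveI : IsIso ((sheafToPresheaf (atomicTopology C h) (Type u)).map
          (initial.to (⊤_ (Sheaf (atomicTopology C h) (Type u))))) := h1
      haveI : IsIso (initial.to (⊤_ (Sheaf (atomicTopology C h) (Type u)))) :=
        isIso_of_reflects_iso _ (sheafToPresheaf (atomicTopology C h) (Type u))
      exact Subobject.mk_eq_top_of_isIso _
    haveI := hNE
    apply zigzag_isConnected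
    have key : ∀ j₁ j₂ : C, Zigzag j₁ j₂ := by
      intro j₁ j₂
      set S : Set C := {Z | Zigzag Z j₂} with hSdef
      have hScl : ZClosed S := by
        intro A B g
        constructor
        · intro hA
          exact Relation.ReflTransGen.trans
            (zigzag_symm.symm _ _ (Relation.ReflTransGen.single (Or.inl ⟨g⟩))) hA
        · intro hB
          exact Relation.ReflTransGen.trans
            (Relation.ReflTransGen.single (Or.inl ⟨g⟩)) hB
      let F := subSheaf h hScl
      haveI : Mono (terminal.from F) :=
        mono_of_subsingleton h _ (fun X => subsingletonULiftPLift _)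
      rcases hsub (Subobject.mk (terminal.from F)) with hb | ht
      · exfalso
        rw [Subobject.bot_eq_initial_to] at hb
        let q : F ⟶ ⊥_ (Sheaf (atomicTopology C h) (Type u)) :=
          Subobject.ofMkLEMk _ _ (le_of_eq hb)
        let q2 : F ⟶ emptySheaf h := q ≫ initial.to _
        exact (q2.hom.app (op j₂) ⟨⟨Relation.ReflTransGen.refl⟩⟩).down.down
      · haveI : IsIso (terminal.from F) := (Subobject.isIso_iff_mk_eq_top _).2 ht
        let w : unitSheaf h ⟶ F := terminal.from _ ≫ inv (terminal.from F)
        exact (w.hom.app (op j₁) ⟨⟨Set.mem_univ _⟩⟩).down.down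
    exact key
  · intro hc
    haveI := hc
    constructor
    · intro s
      refine Subobject.ind (fun s => s = ⊥ ∨ s = ⊤) ?_ s
      intro F f hf
      haveI := hf
      haveI hMf : Mono f.hom :=
        (Sheaf.Hom.mono_iff_presheaf_mono _ _ f).1 hf
      haveI happ : ∀ X, Mono (f.hom.app X) := (NatTrans.mono_iff_mono_app f.hom).1 hMf
      have hFsub : ∀ X, Subsingleton (F.val.obj X) := by
        intro X
        have hinj := (mono_iff_injective (f.hom.app X)).1 (happ X)
        haveI := terminal_subsingleton h X
        exact ⟨fun a b => hinj (Subsingleton.elim _ _)⟩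
      set S : Set C := {Z | Nonempty (F.val.obj (op Z))} with hSdef
      have hSclosed : ZClosed S := by
        intro A B g
        constructor
        · intro hA
          exact mem_of_hom h hFsub g hA
        · intro hB
          exact ⟨F.val.map g.op (Classical.choice hB)⟩
      by_cases hx : ∃ Z : C, Z ∈ S
      · right
        obtain ⟨Z₀, hZ₀⟩ := hx
        have hall : ∀ X : Cᵒᵖ, Nonempty (F.val.obj X) := fun X =>
          ((hSclosed.zigzag (isPreconnected_zigzag X.unop Z₀)).2 hZ₀ : X.unop ∈ S)
        have h1 : IsIso f.hom := by
          haveI : ∀ X, IsIso (f.hom.app X) := by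
            intro X
            rw [isIso_iff_bijective]
            refine ⟨(mono_iff_injective _).1 (happ X), ?_⟩
            intro y
            obtain ⟨a⟩ := hall X
            haveI := terminal_subsingleton h X
            exact ⟨a, Subsingleton.elim _ _⟩
          exact NatIso.isIso_of_isIso_app _
        haveI : IsIso ((sheafToPresheaf (atomicTopology C h) (Type u)).map f) := h1
        haveI : IsIso f :=
          isIso_of_reflects_iso _ (sheafToPresheaf (atomicTopology C h) (Type u))
        exact Subobject.mk_eq_top_of_isIso f
      · left
        have hempty : ∀ X : Cᵒᵖ, IsEmpty (F.val.obj X) := fun X =>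
          ⟨fun a => hx ⟨X.unop, ⟨a⟩⟩⟩
        refine le_antisymm ?_ bot_le
        rw [Subobject.bot_eq_initial_to]
        exact Subobject.mk_le_mk_of_comm (homOfEmpty h hempty) (Subsingleton.elim _ _)
    · intro e
      rw [Subobject.bot_eq_initial_to] at e
      haveI : IsIso (initial.to (⊤_ (Sheaf (atomicTopology C h) (Type u)))) :=
        (Subobject.isIso_iff_mk_eq_top _).2 e
      have X₀ : C := Classical.arbitrary C
      let q : unitSheaf h ⟶ emptySheaf h :=
        terminal.from _ ≫ inv (initial.to (⊤_ (Sheaf (atomicTopology C h) (Type u)))) ≫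
          initial.to _
      exact (q.hom.app (op X₀) ⟨⟨Set.mem_univ _⟩⟩).down.down

end Fraisse
end
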